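/- arXiv:1512.08106 — 4 statements merged into one kernel-verified Lean document; each statement's English description precedes it below -/
import Mathlib

section
/- Let G = (S₁, S₂, E, w) be a game, s₀ an initial state, U ∈ ℕ, and t ∈ ℚ. Define the expanded game G' whose states are (S × {0, 1, …, U}) ∪ {sink}, where a state (s, c) belongs to the player owning s and sink belongs to player 1; for each edge (u, v) ∈ E and each c ∈ {0, …, U}: if d = c + w(u, v) ∈ [0, U] then G' has an edge from (u, c) to (v, d) of weight w(u, v), and otherwise G' has an edge from (u, c) to sink of weight 1; moreover G' has a self-loop on sink of weight 1. Then player 1 has a winning strategy from s₀ for LU(U, 0) ∩ AvgEnergyLevel(t) in G if and only if player 1 has a winning strategy from (s₀, 0) for AvgEnergyLevel(t) in G'. -/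
open Filter

noncomputable section

/-- A two-player turn-based game on a (finite) state space `S`: `p1 s` holds iff state `s`
belongs to player 1 (otherwise it belongs to player 2), `E` is the edge relation (every state
has a successor), and `w` assigns an integer weight to every edge. -/
structure Game (S : Type) where
  p1 : S → Prop
  E : S → S → Prop
  w : S → S → ℤ
  succ : ∀ s, ∃ t, E s t

variable {S : Type}

/-- `π` is a play of `G` starting from `s₀`. -/
def IsPlay (G : Game S) (s₀ : S) (π : ℕ → S) : Prop :=
  π 0 = s₀ ∧ ∀ n, G.E (π n) (π (n + 1))

/-- Energy level of the play `π` at position `n`. -/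
def ELp (G : Game S) (π : ℕ → S) (n : ℕ) : ℤ :=
  ∑ i ∈ Finset.range n, G.w (π i) (π (i + 1))

/-- Average-energy of a play (limsup variant), in the extended reals. -/
def AEsupP (G : Game S) (π : ℕ → S) : EReal :=
  limsup (fun n : ℕ => (((∑ i ∈ Finset.range n, (ELp G π (i + 1) : ℝ)) / n : ℝ) : EReal)) atTop

/-- Average-energy of a play (liminf variant). -/
def AEinfP (G : Game S) (π : ℕ → S) : EReal :=
  liminf (fun n : ℕ => (((∑ i ∈ Finset.range n, (ELp G π (i + 1) : ℝ)) / n : ℝ) : EReal)) atTop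

/-- Mean-payoff of a play (limsup variant). -/
def MPsupP (G : Game S) (π : ℕ → S) : EReal :=
  limsup (fun n : ℕ => (((ELp G π n : ℝ) / n : ℝ) : EReal)) atTop

/-- Total-payoff of a play (limsup variant). -/
def TPsupP (G : Game S) (π : ℕ → S) : EReal :=
  limsup (fun n : ℕ => ((ELp G π n : ℝ) : EReal)) atTop

/-- The history (finite prefix) `π 0, …, π n` of a play, as a list. -/
def hist (π : ℕ → S) (n : ℕ) : List S := List.ofFn (fun i : Fin (n + 1) => π i)

/-- A (deterministic) strategy for player 1: on every nonempty finite path of `G` ending in a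
player-1 state, it prescribes an `E`-successor of the last state. -/
def IsStrat1 (G : Game S) (σ : List S → S) : Prop :=
  ∀ (ρ : List S) (h : ρ ≠ []), List.Chain' G.E ρ → G.p1 (ρ.getLast h) →
    G.E (ρ.getLast h) (σ ρ)

/-- A strategy for player 2 (who owns the states where `p1` fails). -/
def IsStrat2 (G : Game S) (σ : List S → S) : Prop :=
  ∀ (ρ : List S) (h : ρ ≠ []), List.Chain' G.E ρ → ¬ G.p1 (ρ.getLast h) →
    G.E (ρ.getLast h) (σ ρ)

/-- A strategy is memoryless if its choice only depends on the last state of the history. -/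
def Memoryless (σ : List S → S) : Prop :=
  ∀ (ρ ρ' : List S) (h : ρ ≠ []) (h' : ρ' ≠ []),
    ρ.getLast h = ρ'.getLast h' → σ ρ = σ ρ'

/-- The play `π` is consistent with the player-1 strategy `σ`. -/
def Consistent1 (G : Game S) (σ : List S → S) (π : ℕ → S) : Prop :=
  ∀ n, G.p1 (π n) → π (n + 1) = σ (hist π n)

/-- The play `π` is consistent with the player-2 strategy `σ`. -/
def Consistent2 (G : Game S) (σ : List S → S) (π : ℕ → S) : Prop :=
  ∀ n, ¬ G.p1 (π n) → π (n + 1) = σ (hist π n)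

/-- `σ` is a winning strategy for player 1 from `s₀` for the objective `Obj`:
every consistent play from `s₀` belongs to `Obj`. -/
def Winning1 (G : Game S) (s₀ : S) (σ : List S → S) (Obj : (ℕ → S) → Prop) : Prop :=
  IsStrat1 G σ ∧ ∀ π, IsPlay G s₀ π → Consistent1 G σ π → Obj π

/-- `σ` is a winning strategy for player 2 from `s₀` against the objective `Obj`:
every consistent play from `s₀` lies outside `Obj`. -/
def Winning2 (G : Game S) (s₀ : S) (σ : List S → S) (Obj : (ℕ → S) → Prop) : Prop :=
  IsStrat2 G σ ∧ ∀ π, IsPlay G s₀ π → Consistent2 G σ π → ¬ Obj π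

/-- Average-energy objective: the average-energy of the play is at most `t`. -/
def AvgEnergyLevel (G : Game S) (t : ℚ) : (ℕ → S) → Prop :=
  fun π => AEsupP G π ≤ ((t : ℝ) : EReal)

/-- Mean-payoff objective: the mean-payoff of the play is at most `t`. -/
def MeanPayOff (G : Game S) (t : ℚ) : (ℕ → S) → Prop :=
  fun π => MPsupP G π ≤ ((t : ℝ) : EReal)

/-- Total-payoff objective: the total-payoff of the play is at most `t`. -/
def TotalPayOff (G : Game S) (t : ℤ) : (ℕ → S) → Prop :=
  fun π => TPsupP G π ≤ ((t : ℝ) : EReal)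

/-- Lower-bounded energy objective with initial credit `c₀`. -/
def LowerObj (G : Game S) (c₀ : ℕ) : (ℕ → S) → Prop :=
  fun π => ∀ n, 0 ≤ (c₀ : ℤ) + ELp G π n

/-- Lower- and upper-bounded energy objective with upper bound `U` and initial credit `c₀`. -/
def LUObj (G : Game S) (U c₀ : ℕ) : (ℕ → S) → Prop :=
  fun π => ∀ n, 0 ≤ (c₀ : ℤ) + ELp G π n ∧ (c₀ : ℤ) + ELp G π n ≤ (U : ℤ)

/-- Edge relation of the expanded game: states are pairs (state, energy in `[0, U]`) plus a
`sink` state.  An edge of `G` is kept (updating the energy) when the new energy stays in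
`[0, U]`, and is redirected to `sink` otherwise; `sink` has a self-loop. -/
def expE (G : Game S) (U : ℕ) :
    ((S × Fin (U + 1)) ⊕ Unit) → ((S × Fin (U + 1)) ⊕ Unit) → Prop
  | Sum.inl (u, c), Sum.inl (v, d) => G.E u v ∧ (d : ℤ) = (c : ℤ) + G.w u v
  | Sum.inl (u, c), Sum.inr _ =>
      ∃ v, G.E u v ∧ ((c : ℤ) + G.w u v < 0 ∨ (U : ℤ) < (c : ℤ) + G.w u v)
  | Sum.inr _, Sum.inr _ => True
  | Sum.inr _, Sum.inl _ => False

/-- In the expanded game, a state `(s, c)` belongs to the player owning `s`,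
and `sink` belongs to player 1. -/
def expP1 (G : Game S) (U : ℕ) : ((S × Fin (U + 1)) ⊕ Unit) → Prop
  | Sum.inl (s, _) => G.p1 s
  | Sum.inr _ => True

theorem expSucc (G : Game S) (U : ℕ) : ∀ x, ∃ y, expE G U x y := by
  rintro (⟨u, c⟩ | _)
  · obtain ⟨v, hv⟩ := G.succ u
    by_cases h : 0 ≤ (c : ℤ) + G.w u v ∧ (c : ℤ) + G.w u v ≤ (U : ℤ)
    · refine ⟨Sum.inl (v, ⟨((c : ℤ) + G.w u v).toNat, ?_⟩), hv, ?_⟩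
      · omega
      · simp only [Int.toNat_of_nonneg h.1]
    · exact ⟨Sum.inr (), v, hv, by omega⟩
  · exact ⟨Sum.inr (), trivial⟩

/-- Weights of the expanded game of Lemma `aelu_to_ae`: kept edges keep their weight, and all
edges into `sink` (as well as its self-loop) have weight `1`. -/
def expW (G : Game S) (U : ℕ) :
    ((S × Fin (U + 1)) ⊕ Unit) → ((S × Fin (U + 1)) ⊕ Unit) → ℤ
  | Sum.inl (u, _), Sum.inl (v, _) => G.w u v
  | _, _ => 1

/-- The expanded game encoding the energy constraint `0 ≤ energy ≤ U` in the state space. -/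
def expGame (G : Game S) (U : ℕ) : Game ((S × Fin (U + 1)) ⊕ Unit) where
  p1 := expP1 G U
  E := expE G U
  w := expW G U
  succ := expSucc G U


/-! ### Auxiliary lemmas -/

section Aux

lemma chain'_iff_get_old {α : Type} {R : α → α → Prop} {l : List α} :
    List.Chain' R l ↔ ∀ (i : ℕ) (h : i < l.length - 1),
      R (l.get ⟨i, by omega⟩) (l.get ⟨i + 1, by omega⟩) := by
  unfold List.Chain'
  rw [List.isChain_iff_getElem]
  constructor <;> intro H i h
  · simpa [List.get_eq_getElem] using H i (by omega)
  · simpa [List.get_eq_getElem] using H i (by omega)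

lemma getLast_eq_get_old {α : Type} (l : List α) (h : l ≠ []) :
    l.getLast h = l.get ⟨l.length - 1, by
      have := List.length_pos_iff.mpr h; omega⟩ := by
  simp [List.getLast_eq_getElem]

lemma ELp_succ' (G : Game S) (π : ℕ → S) (n : ℕ) :
    ELp G π (n + 1) = ELp G π n + G.w (π n) (π (n + 1)) :=
  Finset.sum_range_succ _ n

lemma hist_length (π : ℕ → S) (n : ℕ) : (hist π n).length = n + 1 := by simp [hist]

lemma hist_ne_nil (π : ℕ → S) (n : ℕ) : hist π n ≠ [] := by
  intro h
  have := hist_length π n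
  rw [h] at this
  simp at this

lemma hist_get (π : ℕ → S) (n i : ℕ) (h : i < (hist π n).length) :
    (hist π n).get ⟨i, h⟩ = π i := by
  have h' : i < n + 1 := by rwa [hist_length] at h
  simp only [hist]
  rw [List.get_ofFn]
  simp

lemma hist_getLast (π : ℕ → S) (n : ℕ) (h : hist π n ≠ []) :
    (hist π n).getLast h = π n := by
  rw [getLast_eq_get_old, hist_get]
  congr 1
  rw [hist_length]
  omega

lemma hist_chain {G : Game S} {s₀ : S} {π : ℕ → S} (hp : IsPlay G s₀ π) (n : ℕ) :
    List.Chain' G.E (hist π n) := by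
  rw [chain'_iff_get_old]
  intro i h
  rw [hist_get, hist_get]
  exact hp.2 i

lemma hist_eq_of_agree {π π' : ℕ → S} (n : ℕ) (h : ∀ k ≤ n, π k = π' k) :
    hist π n = hist π' n := by
  unfold hist
  congr 1
  funext i
  exact h i (by omega)

lemma hist_map {T : Type} (f : S → T) (π : ℕ → S) (n : ℕ) :
    (hist π n).map f = hist (f ∘ π) n := by
  simp [hist, List.map_ofFn]
  rfl

lemma ELp_congr {G : Game S} {π π' : ℕ → S} {n : ℕ} (h : ∀ k ≤ n, π k = π' k) :
    ELp G π n = ELp G π' n := by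
  refine Finset.sum_congr rfl fun i hi => ?_
  rw [Finset.mem_range] at hi
  rw [h i (by omega), h (i + 1) (by omega)]

lemma AE_congr {S₁ S₂ : Type} (G₁ : Game S₁) (G₂ : Game S₂) (π₁ : ℕ → S₁) (π₂ : ℕ → S₂)
    (h : ∀ n, ELp G₁ π₁ n = ELp G₂ π₂ n) : AEsupP G₁ π₁ = AEsupP G₂ π₂ := by
  unfold AEsupP
  congr 1
  funext n
  simp [h]

lemma sum_range_real (n : ℕ) : (∑ i ∈ Finset.range n, ((i : ℝ) + 1)) = n * (n + 1) / 2 := by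
  induction n with
  | zero => simp
  | succ n ih => rw [Finset.sum_range_succ, ih]; push_cast; ring

end Aux


section Sink

variable {G : Game S} {U : ℕ}

lemma sink_stay {s₀ : (S × Fin (U + 1)) ⊕ Unit} {π' : ℕ → (S × Fin (U + 1)) ⊕ Unit}
    (hp : IsPlay (expGame G U) s₀ π') {N : ℕ} (hN : π' N = Sum.inr ()) :
    ∀ m, N ≤ m → π' m = Sum.inr () := by
  intro m hm
  induction m, hm using Nat.le_induction with
  | base => exact hN
  | succ k hk ih =>
    have he := hp.2 k
    rw [ih] at he
    rcases h : π' (k + 1) with p | u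
    · rw [h] at he
      exact absurd he (by simp [expGame, expE])
    · cases u; rfl

lemma sink_EL {s₀ : (S × Fin (U + 1)) ⊕ Unit} {π' : ℕ → (S × Fin (U + 1)) ⊕ Unit}
    (hp : IsPlay (expGame G U) s₀ π') {N : ℕ} (hN : π' N = Sum.inr ()) :
    ∀ j : ℕ, ELp (expGame G U) π' (N + j) = ELp (expGame G U) π' N + j := by
  intro j
  induction j with
  | zero => simp
  | succ j ih =>
    have h1 : π' (N + j) = Sum.inr () := sink_stay hp hN _ (by omega)
    have : N + (j + 1) = (N + j) + 1 := by omega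
    rw [this, ELp_succ', ih, h1]
    have hw : (expGame G U).w (Sum.inr ()) (π' (N + j + 1)) = 1 := by
      rcases π' (N + j + 1) with p | u <;> simp [expGame, expW]
    rw [hw]
    push_cast
    ring

lemma sink_AE_top {s₀ : (S × Fin (U + 1)) ⊕ Unit} {π' : ℕ → (S × Fin (U + 1)) ⊕ Unit}
    (hp : IsPlay (expGame G U) s₀ π') {N : ℕ} (hN : π' N = Sum.inr ()) :
    AEsupP (expGame G U) π' = ⊤ := by
  set E : ℕ → ℤ := fun m => ELp (expGame G U) π' m with hE
  have hne : (Finset.range (N + 1)).Nonempty := ⟨0, by simp⟩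
  set K : ℤ := (Finset.range (N + 1)).inf' hne (fun m => E m - m) with hKdef
  have hK : ∀ m : ℕ, (m : ℤ) + K ≤ E m := by
    intro m
    by_cases hm : m ≤ N
    · have := Finset.inf'_le (s := Finset.range (N + 1)) (fun m => E m - m)
        (Finset.mem_range.mpr (by omega : m < N + 1))
      omega
    · have h1 : E m = E N + (m - N : ℕ) := by
        have := sink_EL hp hN (m - N)
        rw [show N + (m - N) = m by omega] at this
        exact this
      have h2 := Finset.inf'_le (s := Finset.range (N + 1)) (fun m => E m - m)
        (Finset.mem_range.mpr (by omega : N < N + 1))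
      have h3 : ((m - N : ℕ) : ℤ) = (m : ℤ) - N := by
        push_cast [Nat.cast_sub (by omega : N ≤ m)]
        ring
      rw [h1, h3]
      omega
  -- real-valued averages
  set A : ℕ → ℝ := fun n => (∑ i ∈ Finset.range n, ((E (i + 1) : ℝ))) / n with hA
  have hbound : ∀ n : ℕ, 1 ≤ n → ((n : ℝ) + 1) / 2 + K ≤ A n := by
    intro n hn
    have hn0 : (n : ℝ) ≠ 0 := by positivity
    have hsum : (n : ℝ) * (n + 1) / 2 + n * K ≤ ∑ i ∈ Finset.range n, ((E (i + 1) : ℝ)) := by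
      have h1 : ∀ i ∈ Finset.range n, ((i : ℝ) + 1) + K ≤ (E (i + 1) : ℝ) := by
        intro i _
        have := hK (i + 1)
        have : (((i : ℕ) + 1 : ℤ) : ℝ) + (K : ℝ) ≤ ((E (i + 1) : ℤ) : ℝ) := by
          exact_mod_cast by exact_mod_cast this
        push_cast at this ⊢
        linarith
      calc (n : ℝ) * (n + 1) / 2 + n * K
          = ∑ i ∈ Finset.range n, (((i : ℝ) + 1) + K) := by
            rw [Finset.sum_add_distrib, sum_range_real, Finset.sum_const, Finset.card_range]
            push_cast
            ring
        _ ≤ _ := Finset.sum_le_sum h1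
    have hn0' : (0 : ℝ) < n := by positivity
    have h2 : ((n : ℝ) * (n + 1) / 2 + n * K) / n ≤ A n := by
      rw [hA]
      exact (div_le_div_iff_of_pos_right hn0').mpr hsum
    have h3 : ((n : ℝ) * (n + 1) / 2 + n * K) / n = ((n : ℝ) + 1) / 2 + K := by
      field_simp
    linarith
  have hT : Tendsto (fun n : ℕ => ((n : ℝ) + 1) / 2 + (K : ℝ)) atTop atTop := by
    apply tendsto_atTop_add_const_right
    apply Tendsto.atTop_div_const (by norm_num : (0 : ℝ) < 2)
    exact tendsto_atTop_add_const_right _ 1 tendsto_natCast_atTop_atTop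
  have hTA : Tendsto A atTop atTop :=
    tendsto_atTop_mono' atTop ((eventually_ge_atTop 1).mono fun n hn => hbound n hn) hT
  have hE2 : Tendsto (fun n : ℕ => ((A n : ℝ) : EReal)) atTop (nhds ⊤) := by
    rw [EReal.tendsto_nhds_top_iff_real]
    intro x
    exact (hTA.eventually_gt_atTop x).mono fun n h => EReal.coe_lt_coe_iff.mpr h
  unfold AEsupP
  exact hE2.limsup_eq

end Sink


section Extend

lemma take_ofFn_le {a m : ℕ} (h : a ≤ m) (f : ℕ → S) :
    (List.ofFn fun i : Fin m => f i).take a = List.ofFn fun i : Fin a => f i := by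
  apply List.ext_get
  · simp [List.length_take]; omega
  · intro i h1 h2
    simp only [List.length_take, List.length_ofFn, lt_inf_iff] at h1
    simp [List.get_eq_getElem, List.getElem_take', List.getElem_ofFn]

open Classical in
/-- The next state chosen when extending a play: follow `σ` at player-1 states, otherwise an
arbitrary successor. -/
noncomputable def nextSt (G : Game S) (σ : List S → S) (l : List S) (h : l ≠ []) : S :=
  if G.p1 (l.getLast h) then σ l else Classical.choose (G.succ (l.getLast h))

open Classical in
/-- Extension of a finite path `ρ` to an infinite play following `σ` (and arbitrary choices
at player-2 states). -/
noncomputable def extP (G : Game S) (σ : List S → S) (ρ : List S) (d : S) : ℕ → S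
  | n =>
    if h : n < ρ.length then ρ.get ⟨n, h⟩
    else
      if h' : (List.ofFn fun i : Fin n => extP G σ ρ d i) ≠ [] then
        nextSt G σ _ h'
      else d
termination_by n => n
decreasing_by all_goals exact i.isLt

lemma extP_lt {G : Game S} {σ : List S → S} {ρ : List S} {d : S} {n : ℕ} (h : n < ρ.length) :
    extP G σ ρ d n = ρ.get ⟨n, h⟩ := by
  rw [extP]
  simp [h]

lemma extP_ge {G : Game S} {σ : List S → S} {ρ : List S} {d : S} {n : ℕ}
    (hn : ρ.length ≤ n + 1) :
    extP G σ ρ d (n + 1) = nextSt G σ (hist (extP G σ ρ d) n) (hist_ne_nil _ _) := by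
  rw [extP, dif_neg (by omega)]
  have he : (List.ofFn fun i : Fin (n + 1) => extP G σ ρ d i) = hist (extP G σ ρ d) n := rfl
  rw [dif_pos (he ▸ hist_ne_nil _ _)]
  rfl

lemma extP_play {G : Game S} {σ : List S → S} {ρ : List S} {d : S} (hρ : ρ ≠ [])
    (hchain : List.Chain' G.E ρ) (hstrat : IsStrat1 G σ)
    (hcons : ∀ k (h : k + 1 < ρ.length), G.p1 (ρ.get ⟨k, by omega⟩) →
      ρ.get ⟨k + 1, h⟩ = σ (ρ.take (k + 1))) :
    IsPlay G (ρ.head hρ) (extP G σ ρ d) ∧ Consistent1 G σ (extP G σ ρ d) := by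
  have hlen : 0 < ρ.length := List.length_pos_iff.mpr hρ
  have hedge : ∀ n, G.E (extP G σ ρ d n) (extP G σ ρ d (n + 1)) := by
    intro n
    induction n using Nat.strong_induction_on with
    | _ n ih =>
      by_cases h : n + 1 < ρ.length
      · rw [extP_lt (by omega), extP_lt h]
        exact chain'_iff_get_old.mp hchain n (by omega)
      · rw [extP_ge (by omega)]
        have hch : List.Chain' G.E (hist (extP G σ ρ d) n) := by
          rw [chain'_iff_get_old]
          intro i hi
          rw [hist_get, hist_get]
          exact ih i (by rw [hist_length] at hi; omega)
        have hlast : (hist (extP G σ ρ d) n).getLast (hist_ne_nil _ _) = extP G σ ρ d n :=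
          hist_getLast _ _ _
        unfold nextSt
        split_ifs with hp1
        · have := hstrat _ (hist_ne_nil _ _) hch hp1
          rwa [hlast] at this
        · rw [← hlast]
          exact Classical.choose_spec (G.succ _)
  refine ⟨⟨?_, hedge⟩, ?_⟩
  · rw [extP_lt hlen, List.get_mk_zero]
  · intro n hp1
    by_cases h : n + 1 < ρ.length
    · rw [extP_lt h]
      have htake : ρ.take (n + 1) = hist (extP G σ ρ d) n := by
        apply List.ext_get
        · simp [hist_length, List.length_take]; omega
        · intro i h1 h2
          simp only [List.length_take, lt_inf_iff] at h1
          have hi : i < ρ.length := h1.2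
          rw [hist_get, extP_lt hi]
          simp [List.get_eq_getElem, List.getElem_take']
      rw [← htake]
      refine hcons n h ?_
      rwa [extP_lt (by omega)] at hp1
    · rw [extP_ge (by omega)]
      unfold nextSt
      rw [if_pos]
      rw [hist_getLast]
      exact hp1

end Extend


section PrefixEnergy

/-- Along any finite `σ`-consistent path of a game won by `σ` for an objective containing
`LUObj G U 0`, every extension step keeps the energy within `[0, U]`. -/
lemma consistent_prefix_energy {G : Game S} {σ : List S → S} {s₀ : S} {U : ℕ}
    (hstrat : IsStrat1 G σ)
    (hwin : ∀ π, IsPlay G s₀ π → Consistent1 G σ π → LUObj G U 0 π)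
    (π : ℕ → S) (n : ℕ) (hπ0 : π 0 = s₀)
    (hedge : ∀ k, k < n → G.E (π k) (π (k + 1)))
    (hconsk : ∀ k, k < n → G.p1 (π k) → π (k + 1) = σ (hist π k))
    (v : S) (hv : G.E (π n) v)
    (hvcons : G.p1 (π n) → v = σ (hist π n)) :
    0 ≤ ELp G π n + G.w (π n) v ∧ ELp G π n + G.w (π n) v ≤ (U : ℤ) := by
  classical
  set g : ℕ → S := fun k => if k ≤ n then π k else v with hg
  set ρ : List S := List.ofFn fun i : Fin (n + 2) => g i with hρdef
  have hlen : ρ.length = n + 2 := by simp [hρdef]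
  have hne : ρ ≠ [] := by
    intro h; rw [h] at hlen; simp at hlen
  have hget : ∀ i (h : i < ρ.length), ρ.get ⟨i, h⟩ = g i := by
    intro i h
    rw [show ρ.get ⟨i, h⟩ = (List.ofFn fun i : Fin (n + 2) => g i).get ⟨i, by rw [hlen] at h; simp; omega⟩
      from rfl, List.get_ofFn]
    simp
  have hgle : ∀ k, k ≤ n → g k = π k := fun k hk => by simp [hg, hk]
  have hgv : g (n + 1) = v := by simp [hg]
  have htake : ∀ k, k ≤ n → ρ.take (k + 1) = hist π k := by
    intro k hk
    rw [hρdef, take_ofFn_le (by omega)]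
    unfold hist
    congr 1
    funext i
    exact hgle i (by omega)
  have hchain : List.Chain' G.E ρ := by
    rw [chain'_iff_get_old]
    intro i hi
    rw [hlen] at hi
    rw [hget, hget]
    by_cases hin : i < n
    · rw [hgle i (by omega), hgle (i + 1) (by omega)]
      exact hedge i hin
    · have : i = n := by omega
      subst this
      rw [hgle i le_rfl, hgv]
      exact hv
  have hcons : ∀ k (h : k + 1 < ρ.length), G.p1 (ρ.get ⟨k, by omega⟩) →
      ρ.get ⟨k + 1, h⟩ = σ (ρ.take (k + 1)) := by
    intro k h hp1
    rw [hlen] at h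
    rw [hget] at hp1 ⊢
    rw [hgle k (by omega)] at hp1
    rw [htake k (by omega)]
    by_cases hk : k < n
    · rw [hgle (k + 1) (by omega)]
      exact hconsk k hk hp1
    · have : k = n := by omega
      subst this
      rw [hgv]
      exact hvcons hp1
  obtain ⟨hplay, hconsis⟩ := extP_play (d := s₀) hne hchain hstrat hcons
  have hhead : ρ.head hne = s₀ := by
    have := hget 0 (by omega)
    rw [← List.get_mk_zero (by omega)]
    rw [hget 0 (by omega), hgle 0 (by omega), hπ0]
  rw [hhead] at hplay
  have hLU := hwin _ hplay hconsis (n + 1)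
  set τ : ℕ → S := extP G σ ρ s₀ with hτ
  have hτg : ∀ i, i < n + 2 → τ i = g i := by
    intro i h
    rw [hτ, extP_lt (by omega), hget]
  have hEL : ELp G τ (n + 1) = ELp G π n + G.w (π n) v := by
    rw [ELp_succ']
    congr 1
    · refine Finset.sum_congr rfl fun i hi => ?_
      rw [Finset.mem_range] at hi
      rw [hτg i (by omega), hτg (i + 1) (by omega), hgle i (by omega), hgle (i + 1) (by omega)]
    · rw [hτg n (by omega), hτg (n + 1) (by omega), hgle n le_rfl, hgv]
  rw [hEL] at hLU
  simpa using hLU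

end PrefixEnergy


section Lift

lemma expE_def (G : Game S) (U : ℕ) : (expGame G U).E = expE G U := rfl
lemma expW_def (G : Game S) (U : ℕ) : (expGame G U).w = expW G U := rfl
lemma expP1_def (G : Game S) (U : ℕ) : (expGame G U).p1 = expP1 G U := rfl

lemma expE_from_inr {G : Game S} {U : ℕ} {u : Unit} {x : (S × Fin (U + 1)) ⊕ Unit}
    (h : (expGame G U).E (Sum.inr u) x) : x = Sum.inr () := by
  rcases x with p | v
  · exact absurd h (by simp [expGame, expE])
  · cases v; rfl

/-- In-range condition for the first `n + 1` energy levels of a play. -/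
def InR (G : Game S) (U : ℕ) (π : ℕ → S) (n : ℕ) : Prop :=
  ∀ k ≤ n, 0 ≤ ELp G π k ∧ ELp G π k ≤ (U : ℤ)

lemma InR_mono {G : Game S} {U : ℕ} {π : ℕ → S} {m n : ℕ} (h : m ≤ n) (hn : InR G U π n) :
    InR G U π m := fun k hk => hn k (by omega)

open Classical in
/-- Lift of a play of `G` to the expanded game, tracking energy levels; the lift moves to the
sink as soon as the energy level leaves `[0, U]`. -/
noncomputable def liftSt (G : Game S) (U : ℕ) (π : ℕ → S) (n : ℕ) : (S × Fin (U + 1)) ⊕ Unit :=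
  if h : InR G U π n then
    Sum.inl (π n, ⟨(ELp G π n).toNat, by have := h n le_rfl; omega⟩)
  else Sum.inr ()

lemma liftSt_inl {G : Game S} {U : ℕ} {π : ℕ → S} {n : ℕ} (h : InR G U π n) :
    liftSt G U π n = Sum.inl (π n, ⟨(ELp G π n).toNat, by have := h n le_rfl; omega⟩) :=
  dif_pos h

lemma liftSt_inr {G : Game S} {U : ℕ} {π : ℕ → S} {n : ℕ} (h : ¬ InR G U π n) :
    liftSt G U π n = Sum.inr () := dif_neg h

lemma liftStep {G : Game S} {U : ℕ} {π : ℕ → S} (n : ℕ) (hE : G.E (π n) (π (n + 1))) :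
    (expGame G U).E (liftSt G U π n) (liftSt G U π (n + 1)) := by
  have hstep := ELp_succ' G π n
  by_cases h1 : InR G U π n
  · by_cases h2 : InR G U π (n + 1)
    · rw [liftSt_inl h1, liftSt_inl h2]
      refine ⟨hE, ?_⟩
      have e1 := (h1 n le_rfl).1
      have e2 := (h2 (n + 1) le_rfl).1
      simp only [Fin.val_mk]
      omega
    · rw [liftSt_inl h1, liftSt_inr h2]
      refine ⟨π (n + 1), hE, ?_⟩
      have hbad : ¬ (0 ≤ ELp G π (n + 1) ∧ ELp G π (n + 1) ≤ (U : ℤ)) := by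
        intro hc
        exact h2 fun k hk => by
          rcases Nat.lt_succ_iff_lt_or_eq.mp (Nat.lt_succ_of_le hk) with h | h
          · exact h1 k (by omega)
          · subst h; exact hc
      have e1 := (h1 n le_rfl).1
      simp only [Fin.val_mk]
      omega
  · have h2 : ¬ InR G U π (n + 1) := fun h => h1 (InR_mono (by omega) h)
    rw [liftSt_inr h1, liftSt_inr h2]
    exact trivial

lemma liftSt_congr {G : Game S} {U : ℕ} {π π' : ℕ → S} (n : ℕ) (h : ∀ k ≤ n, π k = π' k) :
    liftSt G U π n = liftSt G U π' n := by
  have hEL : ∀ k ≤ n, ELp G π k = ELp G π' k := fun k hk =>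
    ELp_congr fun j hj => h j (by omega)
  have hcond : InR G U π n ↔ InR G U π' n := by
    constructor <;> intro hh k hk
    · rw [← hEL k hk]; exact hh k hk
    · rw [hEL k hk]; exact hh k hk
  by_cases h1 : InR G U π n
  · rw [liftSt_inl h1, liftSt_inl (hcond.mp h1)]
    simp [h n le_rfl, hEL n le_rfl]
  · rw [liftSt_inr h1, liftSt_inr (fun hc => h1 (hcond.mpr hc))]

/-- Projection from the expanded game back to `G` (the sink goes to a default state). -/
def projSt (d : S) {U : ℕ} : (S × Fin (U + 1)) ⊕ Unit → S
  | Sum.inl (s, _) => s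
  | Sum.inr _ => d

end Lift


section Down

variable (G : Game S) (U : ℕ) (d : S)

/-- A list as a function, with default value `d`. -/
def toF (ρ : List S) : ℕ → S := fun i => ρ.getD i d

/-- Lift of a finite path of `G` to the expanded game. -/
noncomputable def liftL (ρ : List S) : List ((S × Fin (U + 1)) ⊕ Unit) :=
  List.ofFn fun i : Fin ρ.length => liftSt G U (toF d ρ) i

/-- Transfer of a strategy of the expanded game to a strategy of `G`. -/
noncomputable def downStrat (σ' : List ((S × Fin (U + 1)) ⊕ Unit) → (S × Fin (U + 1)) ⊕ Unit)
    (ρ : List S) : S :=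
  match σ' (liftL G U d ρ) with
  | Sum.inl (v, _) => v
  | Sum.inr _ => Classical.choose (G.succ (toF d ρ (ρ.length - 1)))

variable {G U d}

lemma toF_get {ρ : List S} {k : ℕ} (h : k < ρ.length) : toF d ρ k = ρ.get ⟨k, h⟩ := by
  unfold toF
  rw [List.getD_eq_getElem ρ d h]
  simp

lemma toF_hist {π : ℕ → S} {n k : ℕ} (hk : k ≤ n) : toF d (hist π n) k = π k := by
  rw [toF_get (by rw [hist_length]; omega), hist_get]

lemma liftL_length (ρ : List S) : (liftL G U d ρ).length = ρ.length := by
  simp [liftL]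

lemma liftL_ne_nil {ρ : List S} (h : ρ ≠ []) : liftL G U d ρ ≠ [] := by
  intro hc
  have := liftL_length (G := G) (U := U) (d := d) ρ
  rw [hc] at this
  simp at this
  exact h (List.length_eq_zero_iff.mp this.symm)

lemma liftL_get {ρ : List S} {i : ℕ} (h : i < (liftL G U d ρ).length) :
    (liftL G U d ρ).get ⟨i, h⟩ = liftSt G U (toF d ρ) i := by
  rw [show (liftL G U d ρ).get ⟨i, h⟩ =
    (List.ofFn fun i : Fin ρ.length => liftSt G U (toF d ρ) i).get
      ⟨i, by rw [liftL_length] at h; simpa using h⟩ from rfl, List.get_ofFn]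
  simp

lemma liftL_getLast {ρ : List S} (h : ρ ≠ []) :
    (liftL G U d ρ).getLast (liftL_ne_nil h) = liftSt G U (toF d ρ) (ρ.length - 1) := by
  rw [getLast_eq_get_old, liftL_get]
  congr 1
  rw [liftL_length]

lemma liftL_hist {π : ℕ → S} (n : ℕ) : liftL G U d (hist π n) = hist (liftSt G U π) n := by
  apply List.ext_get
  · rw [liftL_length, hist_length, hist_length]
  · intro i h1 h2
    rw [liftL_get, hist_get]
    have hi : i ≤ n := by rw [liftL_length, hist_length] at h1; omega
    exact liftSt_congr i fun k hk => toF_hist (by omega)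

lemma liftL_chain {ρ : List S} (hchain : List.Chain' G.E ρ) :
    List.Chain' (expGame G U).E (liftL G U d ρ) := by
  rw [chain'_iff_get_old]
  intro i hi
  rw [liftL_length] at hi
  rw [liftL_get, liftL_get]
  apply liftStep
  have := chain'_iff_get_old.mp hchain i hi
  rwa [← toF_get, ← toF_get] at this

lemma ELp_lift {π : ℕ → S} {π' : ℕ → (S × Fin (U + 1)) ⊕ Unit} {c : ℕ → Fin (U + 1)}
    (h : ∀ i, π' i = Sum.inl (π i, c i)) (n : ℕ) :
    ELp (expGame G U) π' n = ELp G π n := by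
  refine Finset.sum_congr rfl fun i _ => ?_
  rw [h i, h (i + 1)]
  simp [expGame, expW]

end Down


section Backward

variable {G : Game S} {U : ℕ} {d : S}
  {σ' : List ((S × Fin (U + 1)) ⊕ Unit) → (S × Fin (U + 1)) ⊕ Unit}

lemma downStrat_inl {ρ : List S} {v : S} {c : Fin (U + 1)}
    (h : σ' (liftL G U d ρ) = Sum.inl (v, c)) : downStrat G U d σ' ρ = v := by
  unfold downStrat
  rw [h]

lemma downStrat_inr {ρ : List S} {u : Unit} (h : σ' (liftL G U d ρ) = Sum.inr u) :
    downStrat G U d σ' ρ = Classical.choose (G.succ (toF d ρ (ρ.length - 1))) := by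
  unfold downStrat
  rw [h]

lemma downStrat_isStrat (hS' : IsStrat1 (expGame G U) σ') :
    IsStrat1 G (downStrat G U d σ') := by
  intro ρ hne hchain hp1
  have hlen : 0 < ρ.length := List.length_pos_iff.mpr hne
  have hL := liftL_getLast (G := G) (U := U) (d := d) hne
  have hlast : ρ.getLast hne = toF d ρ (ρ.length - 1) := by
    rw [toF_get (by omega), getLast_eq_get_old]
  rcases hσ : σ' (liftL G U d ρ) with ⟨v, c⟩ | u
  · rw [downStrat_inl hσ]
    by_cases hIR : InR G U (toF d ρ) (ρ.length - 1)
    · have hstep := hS' (liftL G U d ρ) (liftL_ne_nil hne) (liftL_chain hchain)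
        (by rw [hL, liftSt_inl hIR]; rw [hlast] at hp1; exact hp1)
      rw [hL, hσ, liftSt_inl hIR] at hstep
      rw [hlast]
      exact hstep.1
    · have hstep := hS' (liftL G U d ρ) (liftL_ne_nil hne) (liftL_chain hchain)
        (by rw [hL, liftSt_inr hIR]; exact trivial)
      rw [hL, liftSt_inr hIR] at hstep
      have := expE_from_inr hstep
      rw [hσ] at this
      exact absurd this (by simp)
  · rw [downStrat_inr hσ, hlast]
    exact Classical.choose_spec (G.succ _)

lemma backward_win {s₀ : S} {t : ℚ}
    (hS' : IsStrat1 (expGame G U) σ')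
    (hW' : ∀ ψ, IsPlay (expGame G U) (Sum.inl (s₀, ⟨0, Nat.succ_pos U⟩)) ψ →
      Consistent1 (expGame G U) σ' ψ → AvgEnergyLevel (expGame G U) t ψ)
    {π : ℕ → S} (hplay : IsPlay G s₀ π) (hcons : Consistent1 G (downStrat G U s₀ σ') π) :
    LUObj G U 0 π ∧ AvgEnergyLevel G t π := by
  have hIR0 : InR G U π 0 := by
    intro k hk
    have : k = 0 := by omega
    subst this
    simp [ELp]
  have hplay' : IsPlay (expGame G U) (Sum.inl (s₀, ⟨0, Nat.succ_pos U⟩)) (liftSt G U π) := by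
    constructor
    · rw [liftSt_inl hIR0]
      simp [hplay.1, ELp]
    · intro n
      exact liftStep n (hplay.2 n)
  have key : ∀ n, (expGame G U).p1 (liftSt G U π n) →
      liftSt G U π (n + 1) = σ' (hist (liftSt G U π) n) := by
    intro n
    induction n using Nat.strong_induction_on with
    | _ n IH =>
      intro hp1'
      by_cases hIR : InR G U π n
      case neg =>
        have hn : liftSt G U π n = Sum.inr () := liftSt_inr hIR
        have hn1 : liftSt G U π (n + 1) = Sum.inr () :=
          liftSt_inr fun h => hIR (InR_mono (by omega) h)
        have hstep := hS' (hist (liftSt G U π) n) (hist_ne_nil _ _) (hist_chain hplay' n)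
          (by rw [hist_getLast, hn]; exact trivial)
        rw [hist_getLast, hn] at hstep
        rw [hn1, expE_from_inr hstep]
      case pos =>
        have hl := liftSt_inl hIR
        have hp1 : G.p1 (π n) := by rw [hl] at hp1'; exact hp1'
        have hlifthist : liftL G U s₀ (hist π n) = hist (liftSt G U π) n := liftL_hist n
        have hstep := hS' (hist (liftSt G U π) n) (hist_ne_nil _ _) (hist_chain hplay' n)
          (by rw [hist_getLast, hl]; exact hp1)
        rw [hist_getLast] at hstep
        rcases hσv : σ' (hist (liftSt G U π) n) with ⟨v, dd⟩ | u
        · have hv : π (n + 1) = v := by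
            rw [hcons n hp1, downStrat_inl (by rw [hlifthist, hσv])]
          rw [hσv, hl] at hstep
          have hd := hstep.2
          have hnn := (hIR n le_rfl).1
          simp only [Fin.val_mk] at hd
          have hEL1 : ELp G π (n + 1) = (dd : ℤ) := by
            rw [ELp_succ', hv]
            omega
          have hddlt := dd.isLt
          have hIR1 : InR G U π (n + 1) := by
            intro k hk
            by_cases h : k ≤ n
            · exact hIR k h
            · have : k = n + 1 := by omega
              subst this
              rw [hEL1]
              omega
          rw [liftSt_inl hIR1]
          simp only [Sum.inl.injEq, Prod.mk.injEq]
          refine ⟨hv, Fin.ext ?_⟩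
          simp [hEL1]
        · exfalso
          cases u
          rw [hσv] at hstep
          set ψ : ℕ → (S × Fin (U + 1)) ⊕ Unit :=
            fun k => if k ≤ n then liftSt G U π k else Sum.inr () with hψ
          have hψk : ∀ k, k ≤ n → ψ k = liftSt G U π k := fun k hk => by simp [hψ, hk]
          have hψn1 : ∀ k, n < k → ψ k = Sum.inr () := fun k hk => by
            simp [hψ, Nat.not_le.mpr hk]
          have hψplay : IsPlay (expGame G U) (Sum.inl (s₀, ⟨0, Nat.succ_pos U⟩)) ψ := by
            constructor
            · rw [hψk 0 (by omega)]
              exact hplay'.1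
            · intro k
              rcases lt_trichotomy k n with h | h | h
              · rw [hψk k (by omega), hψk (k + 1) (by omega)]
                exact hplay'.2 k
              · subst h
                rw [hψk k le_rfl, hψn1 (k + 1) (by omega)]
                exact hstep
              · rw [hψn1 k (by omega), hψn1 (k + 1) (by omega)]
                exact trivial
          have hψcons : Consistent1 (expGame G U) σ' ψ := by
            intro k hpk
            have hhist : ∀ m, m ≤ n → hist ψ m = hist (liftSt G U π) m := fun m hm =>
              hist_eq_of_agree m fun j hj => hψk j (by omega)
            rcases lt_trichotomy k n with h | h | h
            · rw [hψk (k + 1) (by omega), hhist k (by omega)]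
              exact IH k h (by rw [hψk k (by omega)] at hpk; exact hpk)
            · subst h
              rw [hψn1 (k + 1) (by omega), hhist k le_rfl, hσv]
            · have hstep2 := hS' (hist ψ k) (hist_ne_nil _ _) (hist_chain hψplay k)
                (by rw [hist_getLast, hψn1 k h]; exact trivial)
              rw [hist_getLast, hψn1 k h] at hstep2
              rw [hψn1 (k + 1) (by omega), expE_from_inr hstep2]
          have hAE := hW' ψ hψplay hψcons
          unfold AvgEnergyLevel at hAE
          rw [sink_AE_top hψplay (hψn1 (n + 1) (by omega))] at hAE
          exact absurd hAE (not_le.mpr (EReal.coe_lt_top _))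
  have hIRall : ∀ n, InR G U π n := by
    by_contra hc
    push_neg at hc
    obtain ⟨n, hn⟩ := hc
    have hAE := hW' _ hplay' key
    unfold AvgEnergyLevel at hAE
    rw [sink_AE_top hplay' (liftSt_inr hn)] at hAE
    exact absurd hAE (not_le.mpr (EReal.coe_lt_top _))
  refine ⟨fun n => by have := hIRall n n le_rfl; simpa using this, ?_⟩
  have hAE := hW' _ hplay' key
  unfold AvgEnergyLevel at hAE ⊢
  have heq : AEsupP (expGame G U) (liftSt G U π) = AEsupP G π :=
    AE_congr _ _ _ _ fun n =>
      ELp_lift (c := fun i => ⟨(ELp G π i).toNat, by have := (hIRall i) i le_rfl; omega⟩)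
        (fun i => liftSt_inl (hIRall i)) n
  rw [← heq]
  exact hAE

end Backward


section Up

variable {G : Game S} {U : ℕ} {d : S}

open Classical in
/-- Transfer of a strategy of `G` to a strategy of the expanded game. -/
noncomputable def upStrat (G : Game S) (U : ℕ) (d : S) (σ : List S → S)
    (ρ' : List ((S × Fin (U + 1)) ⊕ Unit)) : (S × Fin (U + 1)) ⊕ Unit :=
  match ρ'.getLast? with
  | some (Sum.inl (u, c)) =>
      if h : 0 ≤ (c : ℤ) + G.w u (σ (ρ'.map (projSt d))) ∧
          (c : ℤ) + G.w u (σ (ρ'.map (projSt d))) ≤ (U : ℤ) then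
        Sum.inl (σ (ρ'.map (projSt d)),
          ⟨((c : ℤ) + G.w u (σ (ρ'.map (projSt d)))).toNat, by omega⟩)
      else Sum.inr ()
  | _ => Sum.inr ()

lemma upStrat_inl {σ : List S → S} {ρ' : List ((S × Fin (U + 1)) ⊕ Unit)} {u : S}
    {c : Fin (U + 1)} (hne : ρ' ≠ []) (hlast : ρ'.getLast hne = Sum.inl (u, c))
    (hin : 0 ≤ (c : ℤ) + G.w u (σ (ρ'.map (projSt d))) ∧
      (c : ℤ) + G.w u (σ (ρ'.map (projSt d))) ≤ (U : ℤ)) :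
    upStrat G U d σ ρ' = Sum.inl (σ (ρ'.map (projSt d)),
      ⟨((c : ℤ) + G.w u (σ (ρ'.map (projSt d)))).toNat, by omega⟩) := by
  unfold upStrat
  rw [List.getLast?_eq_getLast hne, hlast]
  exact dif_pos hin

lemma upStrat_inr_of_out {σ : List S → S} {ρ' : List ((S × Fin (U + 1)) ⊕ Unit)} {u : S}
    {c : Fin (U + 1)} (hne : ρ' ≠ []) (hlast : ρ'.getLast hne = Sum.inl (u, c))
    (hin : ¬ (0 ≤ (c : ℤ) + G.w u (σ (ρ'.map (projSt d))) ∧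
      (c : ℤ) + G.w u (σ (ρ'.map (projSt d))) ≤ (U : ℤ))) :
    upStrat G U d σ ρ' = Sum.inr () := by
  unfold upStrat
  rw [List.getLast?_eq_getLast hne, hlast]
  exact dif_neg hin

lemma upStrat_inr_of_last_inr {σ : List S → S} {ρ' : List ((S × Fin (U + 1)) ⊕ Unit)}
    {u : Unit} (hne : ρ' ≠ []) (hlast : ρ'.getLast hne = Sum.inr u) :
    upStrat G U d σ ρ' = Sum.inr () := by
  unfold upStrat
  rw [List.getLast?_eq_getLast hne, hlast]

lemma chain_all_inl : ∀ (l : List ((S × Fin (U + 1)) ⊕ Unit)) (hne : l ≠ [])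
    (_ : List.Chain' (expGame G U).E l) {x} (_ : l.getLast hne = Sum.inl x),
    ∀ y ∈ l, ∃ p, y = Sum.inl p := by
  intro l
  induction l with
  | nil => intro hne; exact absurd rfl hne
  | cons a l ih =>
    intro hne hc x hl y hy
    rcases l with _ | ⟨b, l'⟩
    · simp only [List.mem_singleton] at hy
      subst hy
      exact ⟨x, hl⟩
    · have hc' := List.isChain_cons_cons.mp hc
      have hlast' : (b :: l').getLast (by simp) = Sum.inl x := by
        rw [← hl]
        exact (List.getLast_cons (by simp)).symm
      have hall := ih (by simp) hc'.2 hlast'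
      rcases List.mem_cons.mp hy with rfl | hy'
      · obtain ⟨p, hp⟩ := hall b (by simp)
        have hab := hc'.1
        rw [hp] at hab
        rcases y with q | v
        · exact ⟨q, rfl⟩
        · exact absurd hab (by simp [expGame, expE])
      · exact hall y hy'

lemma chain_proj {l : List ((S × Fin (U + 1)) ⊕ Unit)}
    (hc : List.Chain' (expGame G U).E l) (hall : ∀ y ∈ l, ∃ p, y = Sum.inl p) :
    List.Chain' G.E (l.map (projSt d)) := by
  rw [chain'_iff_get_old]
  intro i hi
  simp only [List.length_map] at hi
  have h1 : i < l.length := by omega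
  have h2 : i + 1 < l.length := by omega
  obtain ⟨p, hp⟩ := hall _ (List.get_mem l ⟨i, h1⟩)
  obtain ⟨q, hq⟩ := hall _ (List.get_mem l ⟨i + 1, h2⟩)
  have he := chain'_iff_get_old.mp hc i (by omega)
  rw [hp, hq] at he
  obtain ⟨u, c⟩ := p
  obtain ⟨v, e⟩ := q
  have hgoal : (l.map (projSt d)).get ⟨i, by simpa using h1⟩ = u := by
    simp only [List.get_eq_getElem, List.getElem_map]
    rw [show l[i] = l.get ⟨i, h1⟩ from rfl, hp]
    rfl
  have hgoal2 : (l.map (projSt d)).get ⟨i + 1, by simpa using h2⟩ = v := by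
    simp only [List.get_eq_getElem, List.getElem_map]
    rw [show l[i + 1] = l.get ⟨i + 1, h2⟩ from rfl, hq]
    rfl
  rw [hgoal, hgoal2]
  exact he.1

lemma upStrat_isStrat {σ : List S → S} (hS : IsStrat1 G σ) :
    IsStrat1 (expGame G U) (upStrat G U d σ) := by
  intro ρ' hne hchain hp1
  rcases hlast : ρ'.getLast hne with ⟨u, c⟩ | uu
  · have hp1u : G.p1 u := by rw [hlast] at hp1; exact hp1
    have hall := chain_all_inl ρ' hne hchain hlast
    have hchainp : List.Chain' G.E (ρ'.map (projSt d)) := chain_proj hchain hall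
    have hnep : ρ'.map (projSt d) ≠ [] := by
      rw [Ne, List.map_eq_nil_iff]
      exact hne
    have hlastp : (ρ'.map (projSt d)).getLast hnep = u := by
      rw [List.getLast_map, hlast]
      rfl
    have hEσ := hS _ hnep hchainp (by rw [hlastp]; exact hp1u)
    rw [hlastp] at hEσ
    by_cases hin : 0 ≤ (c : ℤ) + G.w u (σ (ρ'.map (projSt d))) ∧
        (c : ℤ) + G.w u (σ (ρ'.map (projSt d))) ≤ (U : ℤ)
    · rw [upStrat_inl hne hlast hin]
      refine ⟨hEσ, ?_⟩
      simp only [Fin.val_mk]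
      omega
    · rw [upStrat_inr_of_out hne hlast hin]
      exact ⟨σ (ρ'.map (projSt d)), hEσ, by omega⟩
  · cases uu
    rw [upStrat_inr_of_last_inr hne hlast]
    exact trivial

end Up


section Forward

variable {G : Game S} {U : ℕ} {d : S}

lemma upStep {σ : List S → S} {π' : ℕ → (S × Fin (U + 1)) ⊕ Unit}
    (hcons' : Consistent1 (expGame G U) (upStrat G U d σ) π')
    {k : ℕ} {u w : S} {a b : Fin (U + 1)}
    (ha : π' k = Sum.inl (u, a)) (hb : π' (k + 1) = Sum.inl (w, b)) (hpk : G.p1 u) :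
    w = σ ((hist π' k).map (projSt d)) ∧
      (b : ℤ) = (a : ℤ) + G.w u (σ ((hist π' k).map (projSt d))) := by
  have h := hcons' k (by rw [ha]; exact hpk)
  have hlast : (hist π' k).getLast (hist_ne_nil _ _) = Sum.inl (u, a) := by
    rw [hist_getLast, ha]
  by_cases hin : 0 ≤ (a : ℤ) + G.w u (σ ((hist π' k).map (projSt d))) ∧
      (a : ℤ) + G.w u (σ ((hist π' k).map (projSt d))) ≤ (U : ℤ)
  · rw [upStrat_inl (hist_ne_nil _ _) hlast hin, hb] at h
    simp only [Sum.inl.injEq, Prod.mk.injEq] at h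
    refine ⟨h.1, ?_⟩
    rw [h.2]
    simp [Int.toNat_of_nonneg hin.1]
  · rw [upStrat_inr_of_out (hist_ne_nil _ _) hlast hin, hb] at h
    simp at h

lemma forward_win {s₀ : S} {t : ℚ} {σ : List S → S} (hS : IsStrat1 G σ)
    (hwin : ∀ π, IsPlay G s₀ π → Consistent1 G σ π →
      LUObj G U 0 π ∧ AvgEnergyLevel G t π)
    {π' : ℕ → (S × Fin (U + 1)) ⊕ Unit}
    (hplay' : IsPlay (expGame G U) (Sum.inl (s₀, ⟨0, Nat.succ_pos U⟩)) π')
    (hcons' : Consistent1 (expGame G U) (upStrat G U s₀ σ) π') :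
    AvgEnergyLevel (expGame G U) t π' := by
  set π : ℕ → S := fun n => projSt s₀ (π' n) with hπ
  have hπ0 : π 0 = s₀ := by simp [hπ, hplay'.1, projSt]
  have hmaph : ∀ k, (hist π' k).map (projSt s₀) = hist π k := fun k => by
    rw [hist_map]; rfl
  have claim : ∀ n, ∃ c : Fin (U + 1), π' n = Sum.inl (π n, c) ∧ (c : ℤ) = ELp G π n := by
    intro n
    induction n using Nat.strong_induction_on with
    | _ n IH =>
      rcases n with _ | n
      · refine ⟨⟨0, Nat.succ_pos U⟩, ?_, ?_⟩
        · rw [hplay'.1]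
          simp [hπ, hplay'.1, projSt]
        · simp [ELp]
      · obtain ⟨c, hc, hcel⟩ := IH n (by omega)
        have hπedge : ∀ k, k < n → G.E (π k) (π (k + 1)) := by
          intro k hk
          obtain ⟨a, ha, _⟩ := IH k (by omega)
          obtain ⟨b, hb, _⟩ := IH (k + 1) (by omega)
          have h := hplay'.2 k
          rw [ha, hb] at h
          exact h.1
        have hπcons : ∀ k, k < n → G.p1 (π k) → π (k + 1) = σ (hist π k) := by
          intro k hk hpk
          obtain ⟨a, ha, _⟩ := IH k (by omega)
          obtain ⟨b, hb, _⟩ := IH (k + 1) (by omega)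
          have := (upStep hcons' ha hb hpk).1
          rwa [hmaph k] at this
        have hedge := hplay'.2 n
        rw [hc] at hedge
        rcases hnext : π' (n + 1) with ⟨v, dd⟩ | uu
        · rw [hnext] at hedge
          have hπn1 : π (n + 1) = v := by simp [hπ, hnext, projSt]
          refine ⟨dd, ?_, ?_⟩
          · rw [hπn1]
          · rw [hedge.2, hcel, ELp_succ', hπn1]
        · exfalso
          rw [hnext] at hedge
          by_cases hp1n : G.p1 (π n)
          · have hcn := hcons' n (by rw [hc]; exact hp1n)
            rw [hnext] at hcn
            have hlast : (hist π' n).getLast (hist_ne_nil _ _) = Sum.inl (π n, c) := by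
              rw [hist_getLast, hc]
            have hchainπ : List.Chain' G.E (hist π n) := by
              rw [chain'_iff_get_old]
              intro i hi
              rw [hist_get, hist_get]
              exact hπedge i (by rw [hist_length] at hi; omega)
            have hEv : G.E (π n) (σ (hist π n)) := by
              have := hS (hist π n) (hist_ne_nil _ _) hchainπ
                (by rw [hist_getLast]; exact hp1n)
              rwa [hist_getLast] at this
            by_cases hin : 0 ≤ (c : ℤ) + G.w (π n) (σ ((hist π' n).map (projSt s₀))) ∧
                (c : ℤ) + G.w (π n) (σ ((hist π' n).map (projSt s₀))) ≤ (U : ℤ)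
            · rw [upStrat_inl (hist_ne_nil _ _) hlast hin] at hcn
              exact absurd hcn (by simp)
            · rw [hmaph n] at hin
              have hok := consistent_prefix_energy hS (fun τ h1 h2 => (hwin τ h1 h2).1)
                π n hπ0 hπedge hπcons (σ (hist π n)) hEv (fun _ => rfl)
              rw [hcel] at hin
              exact hin hok
          · obtain ⟨v, hEv, hout⟩ := hedge
            have hok := consistent_prefix_energy hS (fun τ h1 h2 => (hwin τ h1 h2).1)
              π n hπ0 hπedge hπcons v hEv (fun h => absurd h hp1n)
            rw [hcel] at hout
            omega
  have hπplay : IsPlay G s₀ π := by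
    refine ⟨hπ0, fun n => ?_⟩
    obtain ⟨a, ha, _⟩ := claim n
    obtain ⟨b, hb, _⟩ := claim (n + 1)
    have h := hplay'.2 n
    rw [ha, hb] at h
    exact h.1
  have hπcons : Consistent1 G σ π := by
    intro k hpk
    obtain ⟨a, ha, _⟩ := claim k
    obtain ⟨b, hb, _⟩ := claim (k + 1)
    have := (upStep hcons' ha hb hpk).1
    rwa [hmaph k] at this
  have hAE := (hwin π hπplay hπcons).2
  unfold AvgEnergyLevel at hAE ⊢
  have heq : AEsupP (expGame G U) π' = AEsupP G π :=
    AE_congr _ _ _ _ fun n =>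
      ELp_lift (c := fun i => (claim i).choose) (fun i => (claim i).choose_spec.1) n
  rw [heq]
  exact hAE

end Forward

/-- Reduction of the average-energy problem under lower- and upper-bounded energy to a plain
average-energy problem on the expanded game: player 1 wins `LU(U, 0) ∩ AvgEnergyLevel t`
from `s₀` in `G` iff he wins `AvgEnergyLevel t` from `(s₀, 0)` in the expanded game. -/
theorem AELU_reduces_to_AE {S : Type} [Fintype S] (G : Game S) (s₀ : S) (U : ℕ) (t : ℚ) :
    (∃ σ : List S → S,
        Winning1 G s₀ σ (fun π => LUObj G U 0 π ∧ AvgEnergyLevel G t π)) ↔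
    (∃ σ, Winning1 (expGame G U) (Sum.inl (s₀, (⟨0, Nat.succ_pos U⟩ : Fin (U + 1)))) σ
        (AvgEnergyLevel (expGame G U) t)) := by
  constructor
  · rintro ⟨σ, hstrat, hwin⟩
    exact ⟨upStrat G U s₀ σ, upStrat_isStrat hstrat,
      fun π' h1 h2 => forward_win hstrat hwin h1 h2⟩
  · rintro ⟨σ', hS', hW'⟩
    exact ⟨downStrat G U s₀ σ', downStrat_isStrat hS',
      fun π h1 h2 => backward_win hS' hW' h1 h2⟩

end
end

section
/- Let G' be the expanded game of the lower- and upper-bounded energy construction: its states are (S × {0, 1, …, U}) ∪ {sink} for a game G = (S₁, S₂, E, w) and bound U ∈ ℕ, with an edge from (u, c) to (v, d) of weight d − c whenever (u, v) ∈ E and d = c + w(u, v) ∈ [0, U], an edge from (u, c) to sink of weight 1 whenever (u, v) ∈ E and c + w(u, v) ∉ [0, U], and a self-loop on sink of weight 1. Fix t ∈ ℚ, and let G'' have the same states and edges as G', where every edge leaving a state (s, c) gets weight c (including edges into sink), and the self-loop on sink gets weight ⌈t⌉ + 1. Then player 1 has a winning strategy from (s₀, 0) for AvgEnergyLevel(t)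 in G' if and only if player 1 has a winning strategy from (s₀, 0) for MeanPayOff(t) in G''. -/
open Filter

noncomputable section

variable {S : Type}

/-- Weights of the expanded game `G'`: an edge from `(u, c)` to `(v, d)` has weight `d - c`
(which equals `w(u, v)` on actual edges), and all edges into `sink` as well as its self-loop
have weight `1`. -/
def expW' (U : ℕ) :
    ((S × Fin (U + 1)) ⊕ Unit) → ((S × Fin (U + 1)) ⊕ Unit) → ℤ
  | Sum.inl (_, c), Sum.inl (_, d) => (d : ℤ) - (c : ℤ)
  | _, _ => 1

/-- Weights of the mean-payoff game `G''`: every edge leaving a state `(s, c)` (including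
edges into `sink`) has weight `c`, and the self-loop on `sink` has weight `⌈t⌉ + 1`. -/
def expW'' (U : ℕ) (t : ℚ) :
    ((S × Fin (U + 1)) ⊕ Unit) → ((S × Fin (U + 1)) ⊕ Unit) → ℤ
  | Sum.inl (_, c), _ => (c : ℤ)
  | Sum.inr _, _ => ⌈t⌉ + 1

/-- The expanded game `G'` of the lower- and upper-bounded energy construction. -/
def expGame' (G : Game S) (U : ℕ) : Game ((S × Fin (U + 1)) ⊕ Unit) where
  p1 := expP1 G U
  E := expE G U
  w := expW' U
  succ := expSucc G U

/-- The mean-payoff game `G''`: same states and edges as `G'`, reweighted. -/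
def expGame'' (G : Game S) (U : ℕ) (t : ℚ) : Game ((S × Fin (U + 1)) ⊕ Unit) where
  p1 := expP1 G U
  E := expE G U
  w := expW'' U t
  succ := expSucc G U


namespace AEtoMP

variable {S : Type} {G : Game S} {U : ℕ} {t : ℚ} {π : ℕ → (S × Fin (U + 1)) ⊕ Unit}

/-- Energy component of an expanded state. -/
def en {S : Type} {U : ℕ} : (S × Fin (U + 1)) ⊕ Unit → ℤ
  | Sum.inl (_, d) => (d : ℤ)
  | Sum.inr _ => 0

lemma en_nonneg (x : (S × Fin (U + 1)) ⊕ Unit) : 0 ≤ en x := by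
  rcases x with ⟨_, d⟩ | _ <;> simp [en]

lemma en_le (x : (S × Fin (U + 1)) ⊕ Unit) : en x ≤ (U : ℤ) := by
  rcases x with ⟨_, d⟩ | _
  · have := d.isLt; simp only [en]; omega
  · simp only [en]; positivity

lemma ELp_succ {T : Type} (G : Game T) (π : ℕ → T) (n : ℕ) :
    ELp G π (n + 1) = ELp G π n + G.w (π n) (π (n + 1)) :=
  Finset.sum_range_succ _ _

lemma sink_stays (hE : ∀ n, expE G U (π n) (π (n + 1))) {m : ℕ}
    (hm : π m = Sum.inr ()) : ∀ k, π (m + k) = Sum.inr () := by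
  intro k
  induction k with
  | zero => simpa using hm
  | succ k ih =>
      have h := hE (m + k)
      rw [ih] at h
      rcases hx : π (m + k + 1) with ⟨u, c⟩ | u
      · rw [hx] at h; exact absurd h (by simp [expE])
      · cases u; rfl

lemma expW'_ge (x y : (S × Fin (U + 1)) ⊕ Unit) : -(U : ℤ) ≤ expW' U x y := by
  rcases x with ⟨_, c⟩ | _ <;> rcases y with ⟨_, d⟩ | _ <;>
    simp only [expW'] <;> [skip; omega; omega; omega]
  have := c.isLt; have := d.isLt; omega

lemma ELp'_ge_linear (k : ℕ) : -(U : ℤ) * k ≤ ELp (expGame' G U) π k := by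
  induction k with
  | zero => simp [ELp]
  | succ k ih =>
      rw [ELp_succ]
      have h := expW'_ge (U := U) (π k) (π (k + 1))
      have : (expGame' G U).w (π k) (π (k + 1)) = expW' U (π k) (π (k + 1)) := rfl
      rw [this]
      push_cast
      linarith

lemma ELp'_sink (hE : ∀ n, expE G U (π n) (π (n + 1))) {m : ℕ}
    (hm : π m = Sum.inr ()) :
    ∀ j, ELp (expGame' G U) π (m + j) = ELp (expGame' G U) π m + j := by
  intro j
  induction j with
  | zero => simp
  | succ j ih =>
      rw [show m + (j + 1) = (m + j) + 1 from rfl, ELp_succ, ih]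
      have h1 := sink_stays hE hm j
      have h2 := sink_stays hE hm (j + 1)
      rw [show m + j + 1 = m + (j + 1) from rfl, h1, h2]
      have hw : (expGame' G U).w (Sum.inr ()) (Sum.inr ()) = 1 := rfl
      rw [hw]
      push_cast
      ring

lemma ELp'_lb (hE : ∀ n, expE G U (π n) (π (n + 1))) {m : ℕ}
    (hm : π m = Sum.inr ()) (k : ℕ) :
    (k : ℤ) - ((U : ℤ) + 1) * m ≤ ELp (expGame' G U) π k := by
  rcases le_or_gt k m with h | h
  · have h1 := ELp'_ge_linear (G := G) (π := π) k
    have hkm : (k : ℤ) ≤ (m : ℤ) := by exact_mod_cast h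
    have h2 : (U : ℤ) * k ≤ (U : ℤ) * m :=
      mul_le_mul_of_nonneg_left hkm (by positivity)
    linarith
  · obtain ⟨j, rfl⟩ := Nat.exists_eq_add_of_le h.le
    rw [ELp'_sink hE hm j]
    have h1 := ELp'_ge_linear (G := G) (π := π) m
    push_cast
    nlinarith [Int.ofNat_nonneg U, Int.ofNat_nonneg j]

lemma ELp'_eqA (hA : ∀ n, ∃ p, π n = Sum.inl p) (n : ℕ) :
    ELp (expGame' G U) π n = en (π n) - en (π 0) := by
  induction n with
  | zero => simp [ELp]
  | succ n ih =>
      obtain ⟨⟨u, c⟩, hu⟩ := hA n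
      obtain ⟨⟨v, d⟩, hv⟩ := hA (n + 1)
      rw [ELp_succ, ih, hu, hv]
      have hw : (expGame' G U).w (Sum.inl (u, c)) (Sum.inl (v, d)) = (d : ℤ) - (c : ℤ) := rfl
      rw [hw]
      simp only [en]
      ring

lemma ELp''_eqA (hA : ∀ n, ∃ p, π n = Sum.inl p) (n : ℕ) :
    ELp (expGame'' G U t) π n = ∑ i ∈ Finset.range n, en (π i) := by
  induction n with
  | zero => simp [ELp]
  | succ n ih =>
      obtain ⟨⟨u, c⟩, hu⟩ := hA n
      rw [ELp_succ, ih, Finset.sum_range_succ, hu]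
      have hw : (expGame'' G U t).w (Sum.inl (u, c)) (π (n + 1)) = (c : ℤ) := rfl
      rw [hw]
      simp only [en]

lemma ELp''_nonneg_before {m : ℕ} (hmin : ∀ i < m, ∃ p, π i = Sum.inl p) :
    0 ≤ ELp (expGame'' G U t) π m := by
  apply Finset.sum_nonneg
  intro i hi
  obtain ⟨⟨u, c⟩, hu⟩ := hmin i (Finset.mem_range.mp hi)
  rw [hu]
  have hw : (expGame'' G U t).w (Sum.inl (u, c)) (π (i + 1)) = (c : ℤ) := rfl
  rw [hw]
  positivity

lemma ELp''_sink (hE : ∀ n, expE G U (π n) (π (n + 1))) {m : ℕ}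
    (hm : π m = Sum.inr ()) :
    ∀ j, ELp (expGame'' G U t) π (m + j)
      = ELp (expGame'' G U t) π m + j * (⌈t⌉ + 1) := by
  intro j
  induction j with
  | zero => simp
  | succ j ih =>
      rw [show m + (j + 1) = (m + j) + 1 from rfl, ELp_succ, ih]
      have h1 := sink_stays hE hm j
      rw [h1]
      show _ = _ + _ * _
      simp only [expGame'', expW'']
      push_cast
      ring

lemma notAE (hE : ∀ n, expE G U (π n) (π (n + 1))) {m : ℕ}
    (hm : π m = Sum.inr ()) : ¬ AvgEnergyLevel (expGame' G U) t π := by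
  intro hobj
  unfold AvgEnergyLevel AEsupP at hobj
  set C : ℝ := ((U : ℝ) + 1) * m with hC
  have gauss : ∀ n : ℕ, (∑ i ∈ Finset.range n, ((i : ℝ) + 1)) = n * (n + 1) / 2 := by
    intro n
    induction n with
    | zero => simp
    | succ n ih => rw [Finset.sum_range_succ, ih]; push_cast; ring
  have hF : ∀ n : ℕ, 1 ≤ n →
      ((n : ℝ) + 1) / 2 - C
        ≤ (∑ i ∈ Finset.range n, ((ELp (expGame' G U) π (i + 1) : ℝ))) / n := by
    intro n hn
    have hterm : ∀ i ∈ Finset.range n,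
        ((i : ℝ) + 1) - C ≤ ((ELp (expGame' G U) π (i + 1) : ℝ)) := by
      intro i _
      have h := ELp'_lb hE hm (i + 1)
      have h' : (((i : ℕ) + 1 : ℤ) : ℝ) - (((U : ℤ) + 1) * m : ℤ) ≤
          ((ELp (expGame' G U) π (i + 1) : ℤ) : ℝ) := by
        rw [← Int.cast_sub]
        exact_mod_cast h
      push_cast at h'
      rw [hC]
      linarith
    have hsum := Finset.sum_le_sum hterm
    have hsub : (∑ i ∈ Finset.range n, (((i : ℝ) + 1) - C))
        = n * (n + 1) / 2 - n * C := by
      rw [Finset.sum_sub_distrib, gauss]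
      simp [mul_comm]
    rw [hsub] at hsum
    have hn' : (0 : ℝ) < n := by exact_mod_cast hn
    rw [le_div_iff₀ hn']
    nlinarith
  set N : ℕ := max 1 ⌈2 * ((t : ℝ) + 1 + C)⌉₊ with hN
  have hev : ∀ᶠ n in atTop,
      ((((t : ℝ) + 1 : ℝ)) : EReal)
        ≤ (((∑ i ∈ Finset.range n, ((ELp (expGame' G U) π (i + 1) : ℝ))) / n : ℝ) : EReal) := by
    refine Filter.eventually_atTop.2 ⟨N, fun n hn => ?_⟩
    have h1 : 1 ≤ n := le_trans (le_max_left _ _) hn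
    have h2 : 2 * ((t : ℝ) + 1 + C) ≤ n := by
      have : ⌈2 * ((t : ℝ) + 1 + C)⌉₊ ≤ n := le_trans (le_max_right _ _) hn
      exact (Nat.ceil_le.mp this)
    have := hF n h1
    rw [EReal.coe_le_coe_iff]
    linarith
  have hle := le_limsup_of_frequently_le' hev.frequently
  have := le_trans hle hobj
  rw [EReal.coe_le_coe_iff] at this
  linarith

lemma notMP (hE : ∀ n, expE G U (π n) (π (n + 1))) {m : ℕ}
    (hm : π m = Sum.inr ()) (hmin : ∀ i < m, ∃ p, π i = Sum.inl p) :
    ¬ MeanPayOff (expGame'' G U t) t π := by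
  intro hobj
  unfold MeanPayOff MPsupP at hobj
  set A : ℤ := ELp (expGame'' G U t) π m with hA
  have hA0 : 0 ≤ A := ELp''_nonneg_before hmin
  set K : ℤ := ⌈t⌉ + 1 with hK
  have hKt : (t : ℝ) + 1 ≤ (K : ℝ) := by
    have : (t : ℚ) ≤ (⌈t⌉ : ℚ) := Int.le_ceil t
    rw [hK]
    push_cast
    have : (t : ℝ) ≤ ((⌈t⌉ : ℤ) : ℝ) := by exact_mod_cast this
    linarith
  set B : ℝ := (A : ℝ) - m * K with hB
  have hval : ∀ n : ℕ, m ≤ n →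
      ((ELp (expGame'' G U t) π n : ℝ)) = n * K + B := by
    intro n hn
    obtain ⟨j, rfl⟩ := Nat.exists_eq_add_of_le hn
    rw [ELp''_sink hE hm j, hB, hA, hK]
    push_cast
    ring
  set N : ℕ := max (m + 1) (⌈2 * |B|⌉₊ + 1) with hN
  have hev : ∀ᶠ n in atTop,
      ((((t : ℝ) + 1 / 2 : ℝ)) : EReal)
        ≤ ((((ELp (expGame'' G U t) π n : ℝ)) / n : ℝ) : EReal) := by
    refine Filter.eventually_atTop.2 ⟨N, fun n hn => ?_⟩
    have h1 : m ≤ n := le_trans (Nat.le_succ m) (le_trans (le_max_left _ _) hn)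
    have h1' : 1 ≤ n := le_trans (Nat.le_add_left _ _) (le_trans (le_max_left _ _) hn)
    have h2 : 2 * |B| ≤ n := by
      have hh : ⌈2 * |B|⌉₊ + 1 ≤ n := le_trans (le_max_right _ _) hn
      have := Nat.le_ceil (2 * |B|)
      have : (⌈2 * |B|⌉₊ : ℝ) ≤ n := by exact_mod_cast Nat.le_of_succ_le hh
      linarith [Nat.le_ceil (2 * |B|)]
    have hn' : (0 : ℝ) < n := by exact_mod_cast h1'
    rw [EReal.coe_le_coe_iff, hval n h1]
    rw [le_div_iff₀ hn']
    have hBa : -|B| ≤ B := neg_abs_le B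
    nlinarith
  have hle := le_limsup_of_frequently_le' hev.frequently
  have := le_trans hle hobj
  rw [EReal.coe_le_coe_iff] at this
  linarith

lemma keyIff (hE : ∀ n, expE G U (π n) (π (n + 1)))
    (h00 : en (π 0) = 0) :
    AvgEnergyLevel (expGame' G U) t π ↔ MeanPayOff (expGame'' G U t) t π := by
  classical
  by_cases hsink : ∃ n, π n = Sum.inr ()
  · have hne : ∃ n, π n = Sum.inr () := hsink
    set m := Nat.find hne with hmdef
    have hm : π m = Sum.inr () := Nat.find_spec hne
    have hmin : ∀ i < m, ∃ p, π i = Sum.inl p := by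
      intro i hi
      have hni := Nat.find_min hne hi
      rcases hx : π i with p | u
      · exact ⟨p, rfl⟩
      · cases u; exact absurd hx hni
    exact iff_of_false (notAE hE hm) (notMP hE hm hmin)
  · push_neg at hsink
    have hA : ∀ n, ∃ p, π n = Sum.inl p := by
      intro n
      rcases hx : π n with p | u
      · exact ⟨p, rfl⟩
      · cases u; exact absurd hx (hsink n)
    have hsum : ∀ n, (∑ i ∈ Finset.range n, ELp (expGame' G U) π (i + 1))
        = ELp (expGame'' G U t) π n + en (π n) := by
      intro n
      have e1 : ∀ i, ELp (expGame' G U) π (i + 1) = en (π (i + 1)) := by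
        intro i
        rw [ELp'_eqA hA, h00]
        ring
      calc (∑ i ∈ Finset.range n, ELp (expGame' G U) π (i + 1))
          = ∑ i ∈ Finset.range n, en (π (i + 1)) := Finset.sum_congr rfl (fun i _ => e1 i)
        _ = (∑ i ∈ Finset.range (n + 1), en (π i)) - en (π 0) := by
            rw [Finset.sum_range_succ' (fun i => en (π i)) n]; ring
        _ = ELp (expGame'' G U t) π n + en (π n) := by
            rw [Finset.sum_range_succ, ELp''_eqA hA, h00]; ring
    have hFG : ∀ n : ℕ,
        (∑ i ∈ Finset.range n, ((ELp (expGame' G U) π (i + 1) : ℝ))) / n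
          = ((ELp (expGame'' G U t) π n : ℝ)) / n + ((en (π n) : ℝ)) / n := by
      intro n
      rw [← add_div]
      congr 1
      rw [← Int.cast_add, ← hsum n]
      push_cast
      rfl
    constructor
    · -- AE ≤ t → MP ≤ t : G ≤ F pointwise
      intro hAE
      unfold AvgEnergyLevel AEsupP at hAE
      unfold MeanPayOff MPsupP
      refine le_trans (Filter.limsup_le_limsup (Filter.Eventually.of_forall ?_)) hAE
      intro n
      rw [EReal.coe_le_coe_iff, hFG n]
      have h1 : (0 : ℝ) ≤ ((en (π n) : ℝ)) / n := by
        apply div_nonneg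
        · exact_mod_cast en_nonneg (π n)
        · positivity
      linarith
    · -- MP ≤ t → AE ≤ t
      intro hMP
      unfold MeanPayOff MPsupP at hMP
      unfold AvgEnergyLevel AEsupP
      by_contra hcon
      rw [not_le] at hcon
      obtain ⟨b, hb1, hb2⟩ := EReal.lt_iff_exists_real_btwn.mp hcon
      rw [EReal.coe_lt_coe_iff] at hb1
      set ε : ℝ := (b - (t : ℝ)) / 2 with hε
      have hε0 : 0 < ε := by rw [hε]; linarith
      have h1 : Filter.limsup
          (fun n : ℕ => ((((ELp (expGame'' G U t) π n : ℝ)) / n : ℝ) : EReal)) atTop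
          < (((t : ℝ) + ε : ℝ) : EReal) :=
        lt_of_le_of_lt hMP (by rw [EReal.coe_lt_coe_iff]; linarith)
      have h2 := Filter.eventually_lt_of_limsup_lt h1
      have h3 : ∀ᶠ n : ℕ in atTop, (U : ℝ) / n < ε :=
        (tendsto_const_div_atTop_nhds_zero_nat (U : ℝ)).eventually_lt_const hε0
      have h4 : ∀ᶠ n : ℕ in atTop, 1 ≤ n := Filter.eventually_atTop.2 ⟨1, fun n h => h⟩
      have h5 : ∀ᶠ n : ℕ in atTop,
          (((∑ i ∈ Finset.range n, ((ELp (expGame' G U) π (i + 1) : ℝ))) / n : ℝ) : EReal)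
            ≤ ((b : ℝ) : EReal) := by
        filter_upwards [h2, h3, h4] with n hn2 hn3 hn4
        rw [EReal.coe_lt_coe_iff] at hn2
        rw [EReal.coe_le_coe_iff, hFG n]
        have hnn : (0 : ℝ) < n := by exact_mod_cast hn4
        have hen : ((en (π n) : ℝ)) / n ≤ (U : ℝ) / n :=
          (div_le_div_iff_of_pos_right hnn).mpr (by exact_mod_cast en_le (π n))
        linarith
      have h6 := Filter.limsup_le_of_le (h := h5)
      exact absurd (lt_of_lt_of_le hb2 h6) (lt_irrefl _)

end AEtoMP

/-- Reduction of the average-energy objective on the expanded game `G'` to a mean-payoff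
objective on the reweighted game `G''`: player 1 wins `AvgEnergyLevel t` from `(s₀, 0)`
in `G'` iff he wins `MeanPayOff t` from `(s₀, 0)` in `G''`. -/
theorem expAE_reduces_to_MP {S : Type} [Fintype S] (G : Game S) (s₀ : S) (U : ℕ) (t : ℚ) :
    (∃ σ, Winning1 (expGame' G U) (Sum.inl (s₀, (⟨0, Nat.succ_pos U⟩ : Fin (U + 1)))) σ
        (AvgEnergyLevel (expGame' G U) t)) ↔
    (∃ σ, Winning1 (expGame'' G U t) (Sum.inl (s₀, (⟨0, Nat.succ_pos U⟩ : Fin (U + 1)))) σ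
        (MeanPayOff (expGame'' G U t) t)) := by
  constructor
  · rintro ⟨σ, hstrat, hwin⟩
    refine ⟨σ, hstrat, fun π hp hc => ?_⟩
    refine (AEtoMP.keyIff (fun n => hp.2 n) ?_).mp (hwin π hp hc)
    rw [hp.1]; rfl
  · rintro ⟨σ, hstrat, hwin⟩
    refine ⟨σ, hstrat, fun π hp hc => ?_⟩
    refine (AEtoMP.keyIff (fun n => hp.2 n) ?_).mpr (hwin π hp hc)
    rw [hp.1]; rfl

end
end

section
/- Path-bounding lemma: let (S, E, w) be a finite directed weighted graph with w : E → ℤ, let W be the largest absolute weight and N = W·(|S|+2). Let g ∈ ℤ and let (s₀, c₀), (s₁, c₁), …, (s_m, c_m) be an expanded path (i.e., (s_i, s_{i+1}) ∈ E and c_{i+1} = c_i + w(s_i, s_{i+1}) for all i < m) such that c_i ≥ g for every 0 ≤ i ≤ m. Then there exists an expanded path (s'₀, c'₀), (s'₁, c'₁), …, (s'_n, c'_n) with (s'₀, c'₀) = (s₀, c₀) and (s'_n, c'_n) = (s_m, c_m) such that: (i) for every 0 ≤ i ≤ n, g ≤ c'_i ≤ max{c₀, c_m, g} + N² + N³; and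 (ii) there is a strictly increasing injection ι : {1, …, n} → {1, …, m} with s'_i = s_{ι(i)} and c'_i ≤ c_{ι(i)} for every 1 ≤ i ≤ n. -/
namespace PB



lemma exists_records {S : Type} (W : ℕ) (s : ℕ → S) (c : ℕ → ℤ) (a k : ℕ) (hak : a ≤ k)
    (hstep : ∀ i, a ≤ i → i < k → c (i+1) ≤ c i + W) (j : ℕ)
    (hrise : c a + (W : ℤ) * j < c k) :
    ∃ r : ℕ → ℕ, r 0 = a ∧ (∀ t < j, r t < r (t+1)) ∧
      (∀ t ≤ j, a ≤ r t ∧ r t ≤ k) ∧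
      (∀ t < j, c (r t) < c (r (t+1))) ∧
      (∀ t ≤ j, c (r t) ≤ c a + (W : ℤ) * t) := by
  induction j with
  | zero =>
    exact ⟨fun _ => a, rfl, by omega, fun t ht => ⟨le_refl a, hak⟩, by omega,
      fun t ht => by interval_cases t; simp⟩
  | succ j ih =>
    obtain ⟨r, hr0, hrlt, hrbd, hclt, hcbd⟩ := ih (by push_cast at hrise ⊢; nlinarith [hrise])
    have hcrj : c (r j) < c k := by
      have := hcbd j le_rfl
      have : c (r j) ≤ c a + (W:ℤ) * j := this
      push_cast at hrise
      nlinarith [Int.ofNat_nonneg W]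
    have hrjk : r j < k := by
      rcases lt_or_eq_of_le (hrbd j le_rfl).2 with h | h
      · exact h
      · rw [h] at hcrj; omega
    have hex : ∃ i, r j < i ∧ i ≤ k ∧ c (r j) < c i := ⟨k, hrjk, le_rfl, hcrj⟩
    classical
    set i := Nat.find hex with hi
    obtain ⟨hi1, hi2, hi3⟩ := Nat.find_spec hex
    have hibd : c i ≤ c (r j) + W := by
      rcases eq_or_lt_of_le (Nat.succ_le_of_lt hi1) with h | h
      · have h2 := hstep (r j) (hrbd j le_rfl).1 (by omega)
        have : i = r j + 1 := by omega
        rw [this]; exact h2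
      · have hnot := Nat.find_min hex (m := i - 1) (by omega)
        push_neg at hnot
        have h1 : c (i-1) ≤ c (r j) := by
          rcases Nat.lt_or_ge (i-1) (r j + 1) with h' | h'
          · omega
          · exact hnot (by omega) (by omega)
        have h2 := hstep (i-1) (by have := (hrbd j le_rfl).1; omega) (by omega)
        calc c i = c (i - 1 + 1) := by congr 1; omega
        _ ≤ c (i-1) + W := h2
        _ ≤ c (r j) + W := by omega
    refine ⟨fun t => if t ≤ j then r t else i, by simp [hr0, Nat.zero_le], ?_, ?_, ?_, ?_⟩
    · intro t ht
      rcases Nat.lt_succ_iff_lt_or_eq.mp ht with h | h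
      · simp only [if_pos (le_of_lt h), if_pos (Nat.succ_le_of_lt h)]
        exact hrlt t h
      · subst h; simp only [if_pos le_rfl, if_neg (by omega : ¬ t + 1 ≤ t)]
        exact hi1
    · intro t ht
      by_cases h : t ≤ j
      · simp only [if_pos h]; exact hrbd t h
      · simp only [if_neg h]
        exact ⟨le_trans (hrbd j le_rfl).1 (le_of_lt hi1), hi2⟩
    · intro t ht
      rcases Nat.lt_succ_iff_lt_or_eq.mp ht with h | h
      · simp only [if_pos (le_of_lt h), if_pos (Nat.succ_le_of_lt h)]
        exact hclt t h
      · subst h; simp only [if_pos le_rfl, if_neg (by omega : ¬ t + 1 ≤ t)]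
        exact hi3
    · intro t ht
      by_cases h : t ≤ j
      · simp only [if_pos h]; exact hcbd t h
      · simp only [if_neg h]
        have ht' : t = j + 1 := by omega
        subst ht'
        have := hcbd j le_rfl
        push_cast
        push_cast at this
        nlinarith


lemma rel_of_succ {α : Type*} (R : α → α → Prop) (htrans : Transitive R) (f : ℕ → α) (n : ℕ)
    (h : ∀ i < n, R (f i) (f (i+1))) : ∀ i j, i < j → j ≤ n → R (f i) (f j) := by
  intro i j hij hjn
  induction j with
  | zero => omega
  | succ j ih =>
    rcases Nat.lt_succ_iff_lt_or_eq.mp hij with h' | h'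
    · exact htrans (ih h' (by omega)) (h j (by omega))
    · subst h'; exact h i (by omega)

variable {S : Type} [Fintype S]

lemma one_cycle (W : ℕ) (s : ℕ → S) (c : ℕ → ℤ) (a k : ℕ) (hak : a ≤ k)
    (hstep : ∀ i, a ≤ i → i < k → c (i+1) ≤ c i + W)
    (hrise : c a + (W : ℤ) * (Fintype.card S) < c k) :
    ∃ p q a', a ≤ p ∧ p < q ∧ q ≤ a' ∧ a' ≤ k ∧ s p = s q ∧
      0 < c q - c p ∧ c q - c p ≤ (W : ℤ) * (Fintype.card S) ∧
      c a' ≤ c a + (W : ℤ) * (Fintype.card S) := by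
  classical
  set J := Fintype.card S with hJ
  obtain ⟨r, hr0, hrlt, hrbd, hclt, hcbd⟩ := exists_records W s c a k hak hstep J hrise
  -- pigeonhole on t ∈ range (J+1) ↦ s (r t)
  obtain ⟨t1, ht1, t2, ht2, hne, heq⟩ :=
    Finset.exists_ne_map_eq_of_card_lt_of_maps_to
      (s := Finset.range (J+1)) (t := (Finset.univ : Finset S))
      (by simp [hJ]) (fun t _ => Finset.mem_univ (s (r t)))
  simp only [Finset.mem_range] at ht1 ht2
  wlog hlt : t1 < t2 generalizing t1 t2
  · exact this t2 t1 hne.symm heq.symm ht2 ht1 (by omega)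
  have hrmono : ∀ t u, t < u → u ≤ J → r t < r u :=
    rel_of_succ (· < ·) (fun _ _ _ => lt_trans) r J hrlt
  have hcmono : ∀ t u, t < u → u ≤ J → c (r t) < c (r u) :=
    rel_of_succ (fun x y => c x < c y) (fun _ _ _ => lt_trans) r J hclt
  have hca : ∀ t, t ≤ J → c a ≤ c (r t) := by
    intro t ht
    rcases Nat.eq_zero_or_pos t with h | h
    · subst h; rw [hr0]
    · rw [← hr0]; exact le_of_lt (hcmono 0 t h ht)
  refine ⟨r t1, r t2, r J, (hrbd t1 (by omega)).1, hrmono t1 t2 hlt (by omega), ?_, ?_, heq, ?_, ?_, ?_⟩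
  · rcases Nat.eq_or_lt_of_le (by omega : t2 ≤ J) with h | h
    · rw [h]
    · exact le_of_lt (hrmono t2 J h le_rfl)
  · exact (hrbd J le_rfl).2
  · have := hcmono t1 t2 hlt (by omega); omega
  · have h1 := hcbd t2 (by omega)
    have h2 := hca t1 (by omega)
    have : (W:ℤ) * t2 ≤ (W:ℤ) * J := by
      have : (t2:ℤ) ≤ J := by exact_mod_cast Nat.le_of_lt_succ ht2
      nlinarith [Int.ofNat_nonneg W]
    omega
  · have := hcbd J le_rfl; omega

lemma many_cycles (W M : ℕ) (s : ℕ → S) (c : ℕ → ℤ) :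
    ∀ (a k : ℕ), a ≤ k →
    (∀ i, a ≤ i → i < k → c (i+1) ≤ c i + W) →
    (c a + (M : ℤ) * ((W : ℤ) * (Fintype.card S) + 1) ≤ c k) →
    ∃ P Q : ℕ → ℕ, (∀ t < M, a ≤ P t ∧ P t < Q t ∧ Q t ≤ k ∧ s (P t) = s (Q t) ∧
        0 < c (Q t) - c (P t) ∧ c (Q t) - c (P t) ≤ (W : ℤ) * (Fintype.card S)) ∧
      (∀ t, t + 1 < M → Q t ≤ P (t+1)) := by
  induction M with
  | zero => exact fun a k hak _ _ => ⟨id, id, by omega, by omega⟩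
  | succ M ih =>
    intro a k hak hstep hrise
    have hWS : (0:ℤ) ≤ (W:ℤ) * (Fintype.card S) := by positivity
    have h1 : c a + (W : ℤ) * (Fintype.card S) < c k := by push_cast at hrise ⊢; nlinarith
    obtain ⟨p, q, a', hap, hpq, hqa', ha'k, hs, hgain0, hgainW, hca'⟩ :=
      one_cycle W s c a k hak hstep h1
    obtain ⟨P', Q', hcyc', hchain'⟩ := ih a' k ha'k
      (fun i hi hik => hstep i (le_trans (le_trans hap (le_trans (le_of_lt hpq) hqa')) hi) hik)
      (by push_cast at hrise ⊢; nlinarith)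
    refine ⟨fun t => match t with | 0 => p | t+1 => P' t,
            fun t => match t with | 0 => q | t+1 => Q' t, ?_, ?_⟩
    · intro t ht
      match t with
      | 0 => exact ⟨hap, hpq, le_trans hqa' ha'k, hs, hgain0, hgainW⟩
      | t+1 =>
        obtain ⟨h1', h2', h3', h4', h5', h6'⟩ := hcyc' t (by omega)
        exact ⟨le_trans (le_trans hap (le_trans (le_of_lt hpq) hqa')) h1', h2', h3', h4', h5', h6'⟩
    · intro t ht
      match t with
      | 0 => exact le_trans hqa' (hcyc' 0 (by omega)).1
      | t+1 => exact hchain' t (by omega)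



lemma sort_getD_mem (F : Finset ℕ) (t : ℕ) (ht : t < F.card) :
    (F.sort (· ≤ ·)).getD t 0 ∈ F := by
  have hlen : t < (F.sort (· ≤ ·)).length := by rwa [Finset.length_sort]
  rw [List.getD_eq_getElem _ _ hlen]
  exact (Finset.mem_sort _).mp (List.getElem_mem _)

lemma sort_getD_strictMono (F : Finset ℕ) (t u : ℕ) (htu : t < u) (hu : u < F.card) :
    (F.sort (· ≤ ·)).getD t 0 < (F.sort (· ≤ ·)).getD u 0 := by
  have hlenu : u < (F.sort (· ≤ ·)).length := by rwa [Finset.length_sort]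
  have hlent : t < (F.sort (· ≤ ·)).length := by omega
  rw [List.getD_eq_getElem _ _ hlent, List.getD_eq_getElem _ _ hlenu]
  exact (Finset.sortedLT_sort F).getElem_lt_getElem_iff.mpr htu

noncomputable def Dfun (M : ℕ) (P Q : ℕ → ℕ) (c : ℕ → ℤ) (x : ℕ) : ℤ :=
  ∑ t ∈ Finset.range M, if Q t ≤ x then c (Q t) - c (P t) else 0

lemma surgery {S : Type} (E : S → S → Prop) (w : S → S → ℤ) (m : ℕ) (s : ℕ → S) (c : ℕ → ℤ)
    (hpath : ∀ i < m, E (s i) (s (i + 1)) ∧ c (i + 1) = c i + w (s i) (s (i + 1)))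
    (M : ℕ) (P Q : ℕ → ℕ) (hM : 0 < M)
    (hpq : ∀ t < M, P t < Q t ∧ Q t < m ∧ s (P t) = s (Q t))
    (hchain : ∀ t, t + 1 < M → Q t ≤ P (t + 1)) :
    ∃ (n : ℕ) (ι : ℕ → ℕ), n < m ∧ ι 0 = 0 ∧ ι n = m ∧
      (∀ i < n, ι i < ι (i + 1)) ∧ (∀ i ≤ n, ι i ≤ m) ∧
      (∀ i < n, E (s (ι i)) (s (ι (i + 1))) ∧
        c (ι (i + 1)) - Dfun M P Q c (ι (i + 1)) =
          (c (ι i) - Dfun M P Q c (ι i)) + w (s (ι i)) (s (ι (i + 1)))) := by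
  classical
  set D := Dfun M P Q c with hD
  -- chain helpers
  have hQP : ∀ t u, t < u → u < M → Q t ≤ P u := by
    intro t u htu huM
    induction u with
    | zero => omega
    | succ u ih =>
      rcases Nat.lt_succ_iff_lt_or_eq.mp htu with h | h
      · exact le_trans (le_trans (ih h (by omega)) (le_of_lt (hpq u (by omega)).1))
          (hchain u huM)
      · subst h; exact hchain t huM
  have hQQ : ∀ t u, t < u → u < M → Q t < Q u := by
    intro t u htu huM
    exact lt_of_le_of_lt (hQP t u htu huM) (hpq u huM).1
  set Rset := (Finset.range M).biUnion (fun t => Finset.Ioc (P t) (Q t)) with hR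
  have memR : ∀ x, x ∈ Rset ↔ ∃ t, t < M ∧ P t < x ∧ x ≤ Q t := by
    intro x
    simp only [hR, Finset.mem_biUnion, Finset.mem_range, Finset.mem_Ioc]
  set kept := (Finset.range (m+1)).filter (fun x => x ∉ Rset) with hK
  have memK : ∀ x, x ∈ kept ↔ x ≤ m ∧ x ∉ Rset := by
    intro x
    simp only [hK, Finset.mem_filter, Finset.mem_range]
    constructor
    · rintro ⟨h1, h2⟩; exact ⟨by omega, h2⟩
    · rintro ⟨h1, h2⟩; exact ⟨by omega, h2⟩
  have h0K : 0 ∈ kept := by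
    rw [memK]
    refine ⟨Nat.zero_le m, ?_⟩
    intro hmem
    obtain ⟨t, ht, h1, h2⟩ := (memR 0).mp hmem
    omega
  have hmK : m ∈ kept := by
    rw [memK]
    refine ⟨le_rfl, ?_⟩
    intro hmem
    obtain ⟨t, ht, h1, h2⟩ := (memR m).mp hmem
    have := (hpq t ht).2.1; omega
  set l := kept.sort (· ≤ ·) with hl
  have hlen : l.length = kept.card := Finset.length_sort _
  have hpos : 0 < l.length := by
    rw [hlen]; exact Finset.card_pos.mpr ⟨0, h0K⟩
  set n := l.length - 1 with hn
  set ι := fun i => l.getD i 0 with hι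
  have hmemι : ∀ i ≤ n, ι i ∈ kept := by
    intro i hi; exact sort_getD_mem kept i (by omega)
  have hmono : ∀ i j, i < j → j ≤ n → ι i < ι j := by
    intro i j hij hj; exact sort_getD_strictMono kept i j hij (by omega)
  have hmem_eq : ∀ x ∈ kept, ∃ j ≤ n, ι j = x := by
    intro x hx
    have : x ∈ l := (Finset.mem_sort _).mpr hx
    obtain ⟨j, hj, hget⟩ := List.getElem_of_mem this
    refine ⟨j, by omega, ?_⟩
    show l.getD j 0 = x
    rw [List.getD_eq_getElem _ _ hj]; exact hget
  have hι0 : ι 0 = 0 := by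
    obtain ⟨j, hj, hget⟩ := hmem_eq 0 h0K
    rcases Nat.eq_zero_or_pos j with h | h
    · exact h ▸ hget
    · have := hmono 0 j h hj; omega
  have hιn : ι n = m := by
    obtain ⟨j, hj, hget⟩ := hmem_eq m hmK
    have h1 : ι n ≤ m := ((memK _).mp (hmemι n le_rfl)).1
    rcases Nat.eq_or_lt_of_le hj with h | h
    · exact h ▸ hget
    · have := hmono j n h le_rfl; omega
  have hbetween : ∀ i < n, ∀ z, ι i < z → z < ι (i+1) → z ∈ Rset := by
    intro i hi z hz1 hz2
    by_contra hzR
    have hzm : z ≤ m := by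
      have : ι (i+1) ≤ m := ((memK _).mp (hmemι (i+1) (by omega))).1
      omega
    obtain ⟨j, hj, hget⟩ := hmem_eq z ((memK z).mpr ⟨hzm, hzR⟩)
    rcases Nat.lt_or_ge j (i+1) with h | h
    · have h2 : ι j ≤ ι i := by
        rcases Nat.eq_or_lt_of_le (by omega : j ≤ i) with h' | h'
        · rw [h']
        · exact le_of_lt (hmono j i h' (by omega))
      omega
    · have h2 : ι (i+1) ≤ ι j := by
        rcases Nat.eq_or_lt_of_le h with h' | h'
        · rw [← h']
        · exact le_of_lt (hmono (i+1) j h' (by omega))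
      omega
  have hnm : n < m := by
    have hQ0R : Q 0 ∈ Rset := by
      rw [memR]; exact ⟨0, hM, (hpq 0 hM).1, le_rfl⟩
    have hss : kept ⊂ Finset.range (m+1) := by
      refine ⟨Finset.filter_subset _ _, ?_⟩
      intro hsub
      have : Q 0 ∈ kept := hsub (by
        simp only [Finset.mem_range]
        have := (hpq 0 hM).2.1; omega)
      rw [memK] at this
      exact this.2 hQ0R
    have := Finset.card_lt_card hss
    rw [Finset.card_range] at this
    have hm1 : 1 ≤ m := by have := (hpq 0 hM).2.1; omega
    omega
  -- key identity for D
  have DQP : ∀ t < M, D (Q t) - D (P t) = c (Q t) - c (P t) := by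
    intro t htM
    rw [hD, Dfun, Dfun, ← Finset.sum_sub_distrib]
    rw [Finset.sum_eq_single_of_mem t (Finset.mem_range.mpr htM)]
    · have := (hpq t htM).1
      rw [if_pos le_rfl, if_neg (by omega : ¬ Q t ≤ P t)]; ring
    · intro t' ht' hne
      simp only [Finset.mem_range] at ht'
      rcases Nat.lt_or_ge t' t with h | h
      · rw [if_pos (le_trans (hQP t' t h htM) (le_of_lt (hpq t htM).1)),
            if_pos (hQP t' t h htM)]; ring
      · have h' : t < t' := by omega
        have h1 := hQQ t t' h' ht'
        have h2 := (hpq t htM).1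
        rw [if_neg (by omega), if_neg (by omega)]; ring
  -- block lemma
  have block : ∀ t, t < M → ∀ u, u ∉ Rset → u ≤ P t →
      (∀ z, u < z → z ≤ P t → z ∈ Rset) →
      s u = s (Q t) ∧ c (Q t) - c u = D (Q t) - D u := by
    intro t
    induction t using Nat.strong_induction_on with
    | _ t ih =>
      intro htM u hu hup hblk
      rcases Nat.eq_or_lt_of_le hup with h | h
      · subst h
        exact ⟨(hpq t htM).2.2, by have := DQP t htM; linarith⟩
      · have hPt : P t ∈ Rset := hblk (P t) h le_rfl
        rw [memR] at hPt
        obtain ⟨t', ht'M, hPP, hPQ⟩ := hPt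
        have ht't : t' < t := by
          rcases Nat.lt_trichotomy t' t with h' | h' | h'
          · exact h'
          · exfalso; rw [h'] at hPP; omega
          · have := hQP t t' h' ht'M
            have := (hpq t htM).1
            omega
        have hQ'P : Q t' = P t := le_antisymm (hQP t' t ht't htM) hPQ
        have hu' : u ≤ P t' := by
          rcases le_or_gt u (P t') with h'' | h''
          · exact h''
          · exact ((hu ((memR u).mpr ⟨t', ht'M, h'', by omega⟩)).elim)
        have hblk' : ∀ z, u < z → z ≤ P t' → z ∈ Rset := by
          intro z hz1 hz2
          have := (hpq t' ht'M).1
          exact hblk z hz1 (by omega)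
        obtain ⟨hs', hc'⟩ := ih t' ht't ht'M u hu hu' hblk'
        constructor
        · rw [hs', hQ'P]; exact (hpq t htM).2.2
        · have h1 := DQP t htM
          rw [← hQ'P] at h1
          linarith
  -- main conclusion
  refine ⟨n, ι, hnm, hι0, hιn, fun i hi => hmono i (i+1) (by omega) (by omega),
    fun i hi => ((memK _).mp (hmemι i hi)).1, ?_⟩
  intro i hi
  set x := ι i with hx
  set y := ι (i+1) with hy
  have hxy : x < y := hmono i (i+1) (by omega) (by omega)
  have hym : y ≤ m := ((memK _).mp (hmemι (i+1) (by omega))).1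
  have hxK : x ∉ Rset := ((memK _).mp (hmemι i (by omega))).2
  have hyK : y ∉ Rset := ((memK _).mp (hmemι (i+1) (by omega))).2
  have hDeq : ∀ v, v + 1 = y → D y = D v := by
    intro v hv
    rw [hD, Dfun, Dfun]
    apply Finset.sum_congr rfl
    intro t ht
    simp only [Finset.mem_range] at ht
    have hQne : Q t ≠ y := by
      intro hqe
      exact hyK ((memR y).mpr ⟨t, ht, by have := (hpq t ht).1; omega, by omega⟩)
    by_cases hq : Q t ≤ v
    · rw [if_pos (by omega), if_pos hq]
    · rw [if_neg (by omega), if_neg hq]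
  by_cases hcase : y = x + 1
  · have hxm : x < m := by omega
    obtain ⟨hE, hc⟩ := hpath x hxm
    have hDxy : D y = D x := hDeq x (by omega)
    rw [← hcase] at hE hc
    exact ⟨hE, by linarith⟩
  · -- y > x + 1
    have hy1R : y - 1 ∈ Rset := hbetween i hi (y-1) (by omega) (by omega)
    rw [memR] at hy1R
    obtain ⟨t, htM, hP1, hQ1⟩ := hy1R
    have hQty : Q t = y - 1 := by
      rcases Nat.lt_or_ge (Q t) y with h | h
      · omega
      · exfalso
        exact hyK ((memR y).mpr ⟨t, htM, by omega, by omega⟩)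
    have hxP : x ≤ P t := by
      by_contra h'
      exact hxK ((memR x).mpr ⟨t, htM, by omega, by omega⟩)
    have hblk : ∀ z, x < z → z ≤ P t → z ∈ Rset := by
      intro z hz1 hz2
      have := (hpq t htM).1
      exact hbetween i hi z hz1 (by omega)
    obtain ⟨hs', hc'⟩ := block t htM x hxK hxP hblk
    rw [hQty] at hs' hc'
    have hy1m : y - 1 < m := by omega
    obtain ⟨hE, hc⟩ := hpath (y-1) hy1m
    have hy1 : y - 1 + 1 = y := by omega
    rw [hy1] at hE hc
    have hDxy : D y = D (y-1) := hDeq (y-1) hy1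
    constructor
    · rw [hs']; exact hE
    · rw [hs']
      linarith




lemma chainQP (P Q : ℕ → ℕ) (M : ℕ) (hpq : ∀ t < M, P t < Q t)
    (hchain : ∀ t, t + 1 < M → Q t ≤ P (t + 1)) :
    ∀ t u, t < u → u < M → Q t ≤ P u := by
  intro t u htu huM
  induction u with
  | zero => omega
  | succ u ih =>
    rcases Nat.lt_succ_iff_lt_or_eq.mp htu with h | h
    · exact le_trans (le_trans (ih h (by omega)) (le_of_lt (hpq u (by omega)))) (hchain u huM)
    · subst h; exact hchain t huM


lemma Dbound_aux (al be e d : ℕ) (hαe : al ≤ e) (hβd : be ≤ d) (hfull : 1 ≤ be → al = e) :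
    0 ≤ (al:ℤ) * d + (be:ℤ) * (-(e:ℤ)) ∧ (al:ℤ) * d + (be:ℤ) * (-(e:ℤ)) ≤ (d:ℤ) * e := by
  rcases Nat.eq_zero_or_pos be with h | h
  · subst h
    simp only [Nat.cast_zero, zero_mul, add_zero]
    have h1 : (al:ℤ) ≤ e := by exact_mod_cast hαe
    have h2 : (0:ℤ) ≤ d := by positivity
    have h3 : (0:ℤ) ≤ al := by positivity
    constructor
    · positivity
    · nlinarith
  · have h0 : (al:ℤ) = e := by exact_mod_cast hfull h
    have h1 : (be:ℤ) ≤ d := by exact_mod_cast hβd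
    have h2 : (0:ℤ) ≤ e := by positivity
    have h3 : (0:ℤ) ≤ be := by positivity
    have h4 : (0:ℤ) ≤ d := by positivity
    constructor
    · nlinarith
    · nlinarith

lemma de_le_sq (d e NN : ℕ) (hd : d ≤ NN) (he : e ≤ NN) : (d:ℤ) * e ≤ ((NN:ℕ):ℤ) ^ 2 := by
  have h : d * e ≤ NN * NN := Nat.mul_le_mul hd he
  rw [pow_two]
  exact_mod_cast h

variable {S : Type} [Fintype S]


set_option maxHeartbeats 1000000 in
lemma cut (E : S → S → Prop) (w : S → S → ℤ) (W : ℕ)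
    (hW : ∀ s s', E s s' → (w s s').natAbs ≤ W)
    (g : ℤ) (m : ℕ) (s : ℕ → S) (c : ℕ → ℤ)
    (hpath : ∀ i < m, E (s i) (s (i + 1)) ∧ c (i + 1) = c i + w (s i) (s (i + 1)))
    (hlow : ∀ i ≤ m, g ≤ c i)
    (k : ℕ) (hk : k ≤ m)
    (hbig : max (max (c 0) (c m)) g + ((W * (Fintype.card S + 2) : ℕ) : ℤ) ^ 2 +
      ((W * (Fintype.card S + 2) : ℕ) : ℤ) ^ 3 < c k) :
    ∃ (n : ℕ) (s' : ℕ → S) (c' : ℕ → ℤ), n < m ∧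
      s' 0 = s 0 ∧ c' 0 = c 0 ∧ s' n = s m ∧ c' n = c m ∧
      (∀ i < n, E (s' i) (s' (i + 1)) ∧ c' (i + 1) = c' i + w (s' i) (s' (i + 1))) ∧
      (∀ i ≤ n, g ≤ c' i) ∧
      ∃ ι : ℕ → ℕ, ι 0 = 0 ∧ (∀ i < n, ι i < ι (i + 1)) ∧
        (∀ i ≤ n, ι i ≤ m ∧ s' i = s (ι i) ∧ c' i ≤ c (ι i)) := by
  classical
  set cS := Fintype.card S with hcS
  set NN := W * (cS + 2) with hNN
  set NZ : ℤ := ((NN : ℕ) : ℤ) with hNZ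
  set T := max (max (c 0) (c m)) g with hT
  have hbig' : T + NZ ^ 2 + NZ ^ 3 < c k := hbig
  have hc0T : c 0 ≤ T := le_trans (le_max_left _ _) (le_max_left _ _)
  have hcmT : c m ≤ T := le_trans (le_max_right _ _) (le_max_left _ _)
  have hgT : g ≤ T := le_max_right _ _
  have hstepub : ∀ i < m, c (i + 1) ≤ c i + W ∧ c i ≤ c (i + 1) + W := by
    intro i hi
    obtain ⟨hE, hc⟩ := hpath i hi
    have := hW _ _ hE
    rw [hc]
    omega
  -- W ≥ 1
  have hW1 : 1 ≤ W := by
    by_contra h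
    have hw0 : W = 0 := by omega
    have hNN0 : NN = 0 := by rw [hNN, hw0]; ring
    have hNZ0 : NZ = 0 := by rw [hNZ, hNN0]; rfl
    have hconst : ∀ i, i ≤ m → c i = c 0 := by
      intro i hi
      induction i with
      | zero => rfl
      | succ i ih =>
        have h2 := hstepub i (by omega)
        have h3 := ih (by omega)
        omega
    have h1 := hconst k hk
    rw [hNZ0] at hbig'
    simp at hbig'
    omega
  have hS1 : 1 ≤ cS := by
    rw [hcS]
    have : Nonempty S := ⟨s 0⟩
    exact Fintype.card_pos
  have hNN1 : 1 ≤ NN := by rw [hNN]; nlinarith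
  have hNZ1 : (1 : ℤ) ≤ NZ := by rw [hNZ]; exact_mod_cast hNN1
  have hNZ0 : (0 : ℤ) ≤ NZ := by omega
  have hcastNZ : NZ = (W : ℤ) * ((cS : ℤ) + 2) := by rw [hNZ, hNN]; push_cast; ring
  have hWcS : (W : ℤ) * cS + 1 ≤ NZ - 1 := by
    rw [hcastNZ]
    have : (1 : ℤ) ≤ W := by exact_mod_cast hW1
    nlinarith
  have hWle : (W : ℤ) ≤ NZ := by
    rw [hcastNZ]
    have h1 : (1 : ℤ) ≤ W := by exact_mod_cast hW1
    have h2 : (1 : ℤ) ≤ cS := by exact_mod_cast hS1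
    nlinarith
  have hsqnn : (0:ℤ) ≤ NZ ^ 2 := sq_nonneg NZ
  -- the point a
  have haP0 : c 0 ≤ T + NZ ^ 2 := by linarith
  set a := Nat.findGreatest (fun x => c x ≤ T + NZ ^ 2) k with ha
  have haspec : c a ≤ T + NZ ^ 2 := by
    have h := Nat.findGreatest_spec (P := fun x => c x ≤ T + NZ ^ 2) (Nat.zero_le k) haP0
    simpa using h
  have hak : a ≤ k := Nat.findGreatest_le k
  have hagt : ∀ x, a < x → x ≤ k → T + NZ ^ 2 < c x := by
    intro x h1 h2
    have := Nat.findGreatest_is_greatest (P := fun x => c x ≤ T + NZ ^ 2) h1 h2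
    omega
  have hcube : (0:ℤ) ≤ NZ ^ 3 := by positivity
  have halt : a < k := by
    rcases Nat.eq_or_lt_of_le hak with h | h
    · exfalso; rw [h] at haspec; omega
    · exact h
  -- the point b
  have hexb : ∃ j, k + j ≤ m ∧ c (k + j) ≤ T + NZ ^ 2 := by
    refine ⟨m - k, by omega, ?_⟩
    rw [show k + (m - k) = m by omega]
    linarith
  set j0 := Nat.find hexb with hj0
  set b := k + j0 with hb
  obtain ⟨hbm, hbspec⟩ := Nat.find_spec hexb
  have hbspec' : c b ≤ T + NZ ^ 2 := by rw [hb, hj0]; exact hbspec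
  have hbm' : b ≤ m := by rw [hb, hj0]; exact hbm
  have hbmin : ∀ x, k ≤ x → x < b → T + NZ ^ 2 < c x := by
    intro x h1 h2
    have hmin := Nat.find_min hexb (m := x - k) (by omega)
    push_neg at hmin
    rcases le_or_gt x m with h3 | h3
    · have := hmin (by omega)
      rw [show k + (x - k) = x by omega] at this
      omega
    · omega
  have hkb : k < b := by
    rcases Nat.eq_or_lt_of_le (by omega : k ≤ b) with h | h
    · exfalso; rw [← h] at hbspec'; omega
    · exact h
  have hinterior : ∀ x, a < x → x < b → T + NZ ^ 2 < c x := by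
    intro x h1 h2
    rcases le_or_gt x k with h | h
    · exact hagt x h1 h
    · exact hbmin x (by omega) h2
  -- ascent cycles
  have hstep₁ : ∀ i, a ≤ i → i < k → c (i + 1) ≤ c i + W := by
    intro i _ hik
    exact (hstepub i (by omega)).1
  have hrise₁ : c a + ((NN ^ 2 : ℕ) : ℤ) * ((W : ℤ) * cS + 1) ≤ c k := by
    have hA : ((NN ^ 2 : ℕ) : ℤ) = NZ ^ 2 := by rw [hNZ]; push_cast; ring
    rw [hA]
    have h1 : NZ ^ 2 * ((W : ℤ) * cS + 1) ≤ NZ ^ 2 * (NZ - 1) :=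
      mul_le_mul_of_nonneg_left hWcS hsqnn
    have h3 : NZ ^ 2 * (NZ - 1) = NZ ^ 3 - NZ ^ 2 := by ring
    linarith
  obtain ⟨P₁, Q₁, hcyc₁, hchain₁⟩ :=
    many_cycles W (NN ^ 2) s c a k (le_of_lt halt) hstep₁ hrise₁
  -- descent cycles
  have hstep₂ : ∀ i, k ≤ i → i < b - 1 → (-c (i + 1)) ≤ (-c i) + W := by
    intro i _ hik
    have := (hstepub i (by omega)).2
    omega
  have hrise₂ : -c k + ((NN ^ 2 : ℕ) : ℤ) * ((W : ℤ) * cS + 1) ≤ -c (b - 1) := by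
    have hA : ((NN ^ 2 : ℕ) : ℤ) = NZ ^ 2 := by rw [hNZ]; push_cast; ring
    rw [hA]
    have hcb1 : c (b - 1) ≤ c b + W := by
      rcases Nat.eq_or_lt_of_le hkb with h | h
      · have h2 := (hstepub (b-1) (by omega)).2
        rw [show b - 1 + 1 = b by omega] at h2
        exact h2
      · have h2 := (hstepub (b-1) (by omega)).2
        rw [show b - 1 + 1 = b by omega] at h2
        exact h2
    have h1 : NZ ^ 2 * ((W : ℤ) * cS + 1) ≤ NZ ^ 2 * (NZ - 1) :=
      mul_le_mul_of_nonneg_left hWcS hsqnn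
    have h3 : NZ ^ 2 * (NZ - 1) = NZ ^ 3 - NZ ^ 2 := by ring
    have h4 : NZ ≤ NZ ^ 2 := by
      calc NZ = NZ ^ 1 := (pow_one NZ).symm
      _ ≤ NZ ^ 2 := pow_le_pow_right₀ hNZ1 one_le_two
    linarith
  obtain ⟨P₂, Q₂, hcyc₂, hchain₂⟩ :=
    many_cycles W (NN ^ 2) s (fun i => -c i) k (b - 1) (by omega) hstep₂ hrise₂
  -- pigeonhole: ascent
  have hWcSNN : ((W * cS : ℕ) : ℤ) ≤ NZ := by
    rw [hNZ]
    have : W * cS ≤ NN := by rw [hNN]; exact Nat.mul_le_mul_left W (by omega)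
    exact_mod_cast this
  have hcastWcS : ((W * cS : ℕ) : ℤ) = (W : ℤ) * cS := by push_cast; ring
  set f₁ : ℕ → ℕ := fun t => (c (Q₁ t) - c (P₁ t)).toNat with hf₁
  have hmaps₁ : ∀ t ∈ Finset.range (NN ^ 2), f₁ t ∈ Finset.Icc 1 NN := by
    intro t ht
    simp only [Finset.mem_range] at ht
    obtain ⟨_, _, _, _, hg1, hg2⟩ := hcyc₁ t ht
    simp only [Finset.mem_Icc, hf₁]
    rw [← hcastWcS] at hg2
    rw [hNZ] at hWcSNN
    omega
  obtain ⟨d, hdmem, hdfib⟩ :=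
    Finset.exists_le_card_fiber_of_mul_le_card_of_maps_to hmaps₁
      ⟨1, Finset.mem_Icc.mpr ⟨le_rfl, hNN1⟩⟩
      (by rw [Nat.card_Icc, Finset.card_range, pow_two, Nat.add_sub_cancel])
  rw [Finset.mem_Icc] at hdmem
  -- pigeonhole: descent
  set f₂ : ℕ → ℕ := fun t => (c (P₂ t) - c (Q₂ t)).toNat with hf₂
  have hmaps₂ : ∀ t ∈ Finset.range (NN ^ 2), f₂ t ∈ Finset.Icc 1 NN := by
    intro t ht
    simp only [Finset.mem_range] at ht
    obtain ⟨_, _, _, _, hg1, hg2⟩ := hcyc₂ t ht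
    simp only [Finset.mem_Icc, hf₂]
    rw [← hcastWcS] at hg2
    rw [hNZ] at hWcSNN
    omega
  obtain ⟨e, hemem, hefib⟩ :=
    Finset.exists_le_card_fiber_of_mul_le_card_of_maps_to hmaps₂
      ⟨1, Finset.mem_Icc.mpr ⟨le_rfl, hNN1⟩⟩
      (by rw [Nat.card_Icc, Finset.card_range, pow_two, Nat.add_sub_cancel])
  rw [Finset.mem_Icc] at hemem
  -- choose subsets
  obtain ⟨G₁, hG₁sub, hG₁card⟩ := Finset.exists_subset_card_eq (le_trans hemem.2 hdfib)
  obtain ⟨G₂, hG₂sub, hG₂card⟩ := Finset.exists_subset_card_eq (le_trans hdmem.2 hefib)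
  set σ₁ : ℕ → ℕ := fun t => (G₁.sort (· ≤ ·)).getD t 0 with hσ₁
  set σ₂ : ℕ → ℕ := fun t => (G₂.sort (· ≤ ·)).getD t 0 with hσ₂
  have hσ₁mem : ∀ t < e, σ₁ t < NN ^ 2 ∧ f₁ (σ₁ t) = d := by
    intro t ht
    have := sort_getD_mem G₁ t (by omega)
    have h2 := hG₁sub this
    simp only [Finset.mem_filter, Finset.mem_range] at h2
    exact h2
  have hσ₂mem : ∀ t < d, σ₂ t < NN ^ 2 ∧ f₂ (σ₂ t) = e := by
    intro t ht
    have := sort_getD_mem G₂ t (by omega)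
    have h2 := hG₂sub this
    simp only [Finset.mem_filter, Finset.mem_range] at h2
    exact h2
  have hσ₁mono : ∀ t u, t < u → u < e → σ₁ t < σ₁ u := by
    intro t u h1 h2
    exact sort_getD_strictMono G₁ t u h1 (by omega)
  have hσ₂mono : ∀ t u, t < u → u < d → σ₂ t < σ₂ u := by
    intro t u h1 h2
    exact sort_getD_strictMono G₂ t u h1 (by omega)
  -- gains
  have hgain₁ : ∀ t < e, c (Q₁ (σ₁ t)) - c (P₁ (σ₁ t)) = (d : ℤ) := by
    intro t ht
    obtain ⟨hlt, hfd⟩ := hσ₁mem t ht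
    obtain ⟨_, _, _, _, hg1, _⟩ := hcyc₁ (σ₁ t) hlt
    simp only [hf₁] at hfd
    omega
  have hgain₂ : ∀ t < d, c (P₂ (σ₂ t)) - c (Q₂ (σ₂ t)) = (e : ℤ) := by
    intro t ht
    obtain ⟨hlt, hfd⟩ := hσ₂mem t ht
    obtain ⟨_, _, _, _, hg1, _⟩ := hcyc₂ (σ₂ t) hlt
    simp only [hf₂] at hfd
    omega
  -- combined cycle family
  set M := e + d with hM
  set P : ℕ → ℕ := fun t => if t < e then P₁ (σ₁ t) else P₂ (σ₂ (t - e)) with hP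
  set Q : ℕ → ℕ := fun t => if t < e then Q₁ (σ₁ t) else Q₂ (σ₂ (t - e)) with hQ
  have hQP₁ := chainQP P₁ Q₁ (NN ^ 2) (fun t ht => (hcyc₁ t ht).2.1) hchain₁
  have hQP₂ := chainQP P₂ Q₂ (NN ^ 2) (fun t ht => (hcyc₂ t ht).2.1) hchain₂
  have he1 : 1 ≤ e := hemem.1
  have hd1 : 1 ≤ d := hdmem.1
  have hpqM : ∀ t < M, P t < Q t ∧ Q t < m ∧ s (P t) = s (Q t) := by
    intro t ht
    by_cases h : t < e
    · obtain ⟨h1, h2, h3, h4, _, _⟩ := hcyc₁ (σ₁ t) (hσ₁mem t h).1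
      simp only [hP, hQ, if_pos h]
      exact ⟨h2, by omega, h4⟩
    · obtain ⟨h1, h2, h3, h4, _, _⟩ := hcyc₂ (σ₂ (t - e)) (hσ₂mem (t - e) (by omega)).1
      simp only [hP, hQ, if_neg h]
      exact ⟨h2, by omega, h4⟩
  have hPa : ∀ t < M, a ≤ P t := by
    intro t ht
    by_cases h : t < e
    · simp only [hP, if_pos h]
      exact (hcyc₁ (σ₁ t) (hσ₁mem t h).1).1
    · simp only [hP, if_neg h]
      exact le_trans (le_of_lt halt) (hcyc₂ (σ₂ (t - e)) (hσ₂mem (t - e) (by omega)).1).1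
  have hQ₁k : ∀ t < e, Q₁ (σ₁ t) ≤ k := fun t ht => (hcyc₁ (σ₁ t) (hσ₁mem t ht).1).2.2.1
  have hP₂k : ∀ t < d, k ≤ P₂ (σ₂ t) := fun t ht => (hcyc₂ (σ₂ t) (hσ₂mem t ht).1).1
  have hQ₂b : ∀ t < d, Q₂ (σ₂ t) ≤ b - 1 := fun t ht => (hcyc₂ (σ₂ t) (hσ₂mem t ht).1).2.2.1
  have hchainM : ∀ t, t + 1 < M → Q t ≤ P (t + 1) := by
    intro t ht
    by_cases h : t + 1 < e
    · simp only [hP, hQ, if_pos h, if_pos (by omega : t < e)]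
      exact hQP₁ (σ₁ t) (σ₁ (t + 1)) (hσ₁mono t (t + 1) (by omega) h) (hσ₁mem (t + 1) h).1
    · by_cases h2 : t < e
      · -- t + 1 = e
        simp only [hP, hQ, if_pos h2, if_neg h]
        exact le_trans (hQ₁k t h2) (hP₂k (t + 1 - e) (by omega))
      · simp only [hP, hQ, if_neg h, if_neg h2]
        refine hQP₂ (σ₂ (t - e)) (σ₂ (t + 1 - e)) ?_ (hσ₂mem (t + 1 - e) (by omega)).1
        exact hσ₂mono (t - e) (t + 1 - e) (by omega) (by omega)
  -- surgery
  obtain ⟨n, ι, hnm, hι0, hιn, hιmono, hιm, hstepD⟩ :=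
    surgery E w m s c hpath M P Q (by omega) hpqM hchainM
  set D := Dfun M P Q c with hD
  -- sum splitting helper
  have hsplit : ∀ F : ℕ → ℤ, ∑ t ∈ Finset.range (e + d), F t =
      (∑ t ∈ Finset.range e, F t) + ∑ t ∈ Finset.Ico e (e + d), F t := by
    intro F
    rw [Finset.range_eq_Ico, ← Finset.sum_Ico_consecutive F (Nat.zero_le e) (by omega),
      ← Finset.range_eq_Ico]
  have hgainQ : ∀ t < e, c (Q t) - c (P t) = (d : ℤ) := by
    intro t ht
    simp only [hP, hQ, if_pos ht]
    exact hgain₁ t ht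
  have hgainQ₂ : ∀ t, e ≤ t → t < e + d → c (Q t) - c (P t) = -(e : ℤ) := by
    intro t h1 h2
    simp only [hP, hQ, if_neg (by omega : ¬ t < e)]
    have := hgain₂ (t - e) (by omega)
    omega
  -- D bounds
  have hDval : ∀ x, D x = ((Finset.range e).filter (fun t => Q t ≤ x)).card • (d : ℤ) +
      ((Finset.Ico e (e + d)).filter (fun t => Q t ≤ x)).card • (-(e : ℤ)) := by
    intro x
    rw [hD, Dfun, hM, hsplit]
    congr 1
    · rw [← Finset.sum_filter, Finset.sum_congr rfl (fun t ht => by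
        exact hgainQ t (Finset.mem_range.mp (Finset.mem_of_mem_filter t ht))),
        Finset.sum_const]
    · rw [← Finset.sum_filter, Finset.sum_congr rfl (fun t ht => by
        have h2 := Finset.mem_Ico.mp (Finset.mem_of_mem_filter t ht)
        exact hgainQ₂ t h2.1 h2.2), Finset.sum_const]
  have hDfull : ∀ x, (∀ t, t < M → Q t ≤ x) → D x = 0 := by
    intro x hx
    rw [hDval x]
    rw [Finset.filter_true_of_mem (fun t ht => hx t (by
      simp only [Finset.mem_range] at ht; omega)),
      Finset.filter_true_of_mem (fun t ht => hx t (by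
      simp only [Finset.mem_Ico] at ht; omega))]
    rw [Finset.card_range, Nat.card_Ico, Nat.add_sub_cancel_left]
    simp only [nsmul_eq_mul]
    push_cast
    ring
  have hDbounds : ∀ x, 0 ≤ D x ∧ D x ≤ (d : ℤ) * e := by
    intro x
    rw [hDval x]
    set α := ((Finset.range e).filter (fun t => Q t ≤ x)).card with hα
    set β := ((Finset.Ico e (e + d)).filter (fun t => Q t ≤ x)).card with hβ
    have hαe : α ≤ e := le_trans (Finset.card_filter_le _ _) (le_of_eq (Finset.card_range e))
    have hβd : β ≤ d := by
      have := Finset.card_filter_le (Finset.Ico e (e + d)) (fun t => Q t ≤ x)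
      rw [Nat.card_Ico, Nat.add_sub_cancel_left] at this
      rw [hβ]
      exact this
    have hfull : 1 ≤ β → α = e := by
      intro hβ0
      rw [hα]
      obtain ⟨t₀, ht₀⟩ := Finset.card_pos.mp hβ0
      simp only [Finset.mem_filter, Finset.mem_Ico] at ht₀
      obtain ⟨⟨ht₀1, ht₀2⟩, ht₀3⟩ := ht₀
      rw [Finset.filter_true_of_mem, Finset.card_range]
      intro t ht
      simp only [Finset.mem_range] at ht
      have h1 : Q t ≤ k := by
        simp only [hQ, if_pos ht]
        exact hQ₁k t ht
      have h2 : k ≤ Q t₀ := by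
        simp only [hQ, if_neg (by omega : ¬ t₀ < e)]
        have := hP₂k (t₀ - e) (by omega)
        have h3 := (hcyc₂ (σ₂ (t₀ - e)) (hσ₂mem (t₀ - e) (by omega)).1).2.1
        omega
      omega
    simp only [nsmul_eq_mul]
    exact Dbound_aux α β e d hαe hβd hfull
  have hDleft : ∀ x, x ≤ a → D x = 0 := by
    intro x hx
    rw [hD, Dfun]
    apply Finset.sum_eq_zero
    intro t ht
    simp only [Finset.mem_range] at ht
    rw [if_neg]
    have hPalow := hPa t (by omega)
    have := (hpqM t (by omega)).1
    omega
  have hDright : ∀ x, b - 1 ≤ x → D x = 0 := by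
    intro x hx
    apply hDfull
    intro t ht
    by_cases h : t < e
    · simp only [hQ, if_pos h]
      have := hQ₁k t h
      omega
    · simp only [hQ, if_neg h]
      have := hQ₂b (t - e) (by omega)
      omega
  have hDmid : ∀ x, D x ≠ 0 → a < x ∧ x < b := by
    intro x hx
    constructor
    · by_contra h
      exact hx (hDleft x (by omega))
    · by_contra h
      exact hx (hDright x (by omega))
  have hDsq : ∀ x, D x ≤ NZ ^ 2 := by
    intro x
    have h1 := (hDbounds x).2
    have h2 : (d : ℤ) * e ≤ NZ ^ 2 := by
      rw [hNZ]; exact de_le_sq d e NN hdmem.2 hemem.2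
    exact le_trans h1 h2
  -- final path
  refine ⟨n, fun i => s (ι i), fun i => c (ι i) - D (ι i), hnm, ?_, ?_, ?_, ?_, ?_, ?_, ?_⟩
  · show s (ι 0) = s 0
    rw [hι0]
  · show c (ι 0) - D (ι 0) = c 0
    rw [hι0, hDleft 0 (by omega)]; ring
  · show s (ι n) = s m
    rw [hιn]
  · show c (ι n) - D (ι n) = c m
    rw [hιn, hDright m (by omega)]; ring
  · intro i hi
    exact hstepD i hi
  · intro i hi
    show g ≤ c (ι i) - D (ι i)
    by_cases h : D (ι i) = 0
    · rw [h]
      have := hlow (ι i) (hιm i hi)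
      omega
    · obtain ⟨h1, h2⟩ := hDmid (ι i) h
      have h3 := hinterior (ι i) h1 h2
      have h4 := hDsq (ι i)
      linarith only [h3, h4, hgT]
  · refine ⟨ι, hι0, hιmono, ?_⟩
    intro i hi
    refine ⟨hιm i hi, rfl, ?_⟩
    show c (ι i) - D (ι i) ≤ c (ι i)
    have := (hDbounds (ι i)).1
    omega


end PB

open PB

lemma mono_of_succ' (f : ℕ → ℕ) (n : ℕ) (h : ∀ i < n, f i < f (i+1)) :
    ∀ i j, i < j → j ≤ n → f i < f j := by
  intro i j hij hjn
  induction j with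
  | zero => omega
  | succ j ih =>
    rcases Nat.lt_succ_iff_lt_or_eq.mp hij with h' | h'
    · exact lt_trans (ih h' (by omega)) (h j (by omega))
    · subst h'; exact h i (by omega)




/-- Path-bounding lemma: in a finite directed weighted graph with edge weights of absolute
value at most `W`, any expanded path `(s 0, c 0), …, (s m, c m)` whose energies all stay above
`g` can be replaced by an expanded path with the same endpoints whose energies stay in
`[g, max {c 0, c m, g} + N² + N³]` with `N = W·(|S| + 2)`, and whose intermediate
configurations inject, in an increasing way and with no larger energies, into those of the
original path. -/
theorem path_bounding {S : Type} [Fintype S] (E : S → S → Prop) (w : S → S → ℤ)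
    (W : ℕ) (hW : ∀ s s', E s s' → (w s s').natAbs ≤ W)
    (g : ℤ) (m : ℕ) (s : ℕ → S) (c : ℕ → ℤ)
    (hpath : ∀ i < m, E (s i) (s (i + 1)) ∧ c (i + 1) = c i + w (s i) (s (i + 1)))
    (hlow : ∀ i ≤ m, g ≤ c i) :
    ∃ (n : ℕ) (s' : ℕ → S) (c' : ℕ → ℤ),
      s' 0 = s 0 ∧ c' 0 = c 0 ∧ s' n = s m ∧ c' n = c m ∧
      (∀ i < n, E (s' i) (s' (i + 1)) ∧ c' (i + 1) = c' i + w (s' i) (s' (i + 1))) ∧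
      (∀ i ≤ n, g ≤ c' i ∧
        c' i ≤ max (max (c 0) (c m)) g +
          ((W * (Fintype.card S + 2) : ℕ) : ℤ) ^ 2 +
          ((W * (Fintype.card S + 2) : ℕ) : ℤ) ^ 3) ∧
      (∃ ι : ℕ → ℕ, StrictMonoOn ι (Set.Icc 1 n) ∧
        ∀ i, 1 ≤ i → i ≤ n → 1 ≤ ι i ∧ ι i ≤ m ∧ s' i = s (ι i) ∧ c' i ≤ c (ι i)) := by
  induction m using Nat.strong_induction_on generalizing s c with
  | _ m IH =>
    by_cases hA : ∀ i ≤ m, c i ≤ max (max (c 0) (c m)) g +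
        ((W * (Fintype.card S + 2) : ℕ) : ℤ) ^ 2 + ((W * (Fintype.card S + 2) : ℕ) : ℤ) ^ 3
    · refine ⟨m, s, c, rfl, rfl, rfl, rfl, hpath,
        fun i hi => ⟨hlow i hi, hA i hi⟩,
        fun i => i, fun x _ y _ h => h, fun i h1 h2 => ⟨h1, h2, rfl, le_rfl⟩⟩
    · push_neg at hA
      obtain ⟨k, hk, hbig⟩ := hA
      obtain ⟨n₁, s₁, c₁, hn₁m, hs₁0, hc₁0, hs₁n, hc₁n, hpath₁, hlow₁, ι₁, hι₁0, hι₁mono,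
        hι₁props⟩ := cut E w W hW g m s c hpath hlow k hk hbig
      obtain ⟨n₂, s₂, c₂, h20, h2c0, h2n, h2cn, hpath₂, hbound₂, ι₂, hι₂mono, hι₂props⟩ :=
        IH n₁ hn₁m s₁ c₁ hpath₁ hlow₁
      have hmono₁ : ∀ i j, i < j → j ≤ n₁ → ι₁ i < ι₁ j := mono_of_succ' ι₁ n₁ hι₁mono
      refine ⟨n₂, s₂, c₂, h20.trans hs₁0, h2c0.trans hc₁0, h2n.trans hs₁n, h2cn.trans hc₁n,
        hpath₂, ?_, fun i => ι₁ (ι₂ i), ?_, ?_⟩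
      · intro i hi
        have h := hbound₂ i hi
        rw [hc₁0, hc₁n] at h
        exact h
      · intro i hi j hj hij
        have h1 := hι₂props i (Set.mem_Icc.mp hi).1 (Set.mem_Icc.mp hi).2
        have h2 := hι₂props j (Set.mem_Icc.mp hj).1 (Set.mem_Icc.mp hj).2
        exact hmono₁ (ι₂ i) (ι₂ j) (hι₂mono hi hj hij) h2.2.1
      · intro i h1 h2
        obtain ⟨ha1, ha2, ha3, ha4⟩ := hι₂props i h1 h2
        obtain ⟨hb1, hb2, hb3⟩ := hι₁props (ι₂ i) ha2
        refine ⟨?_, hb1, ha3.trans hb2, le_trans ha4 hb3⟩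
        have h5 : ι₁ 0 < ι₁ (ι₂ i) := hmono₁ 0 (ι₂ i) ha1 ha2
        rw [hι₁0] at h5
        exact h5
end

section
/- Pseudo-polynomial memory lower bound for player 1 in bounded-energy games: for every U ∈ ℕ with U ≥ 1, consider the one-player game G_U with states {s, s'} (both of player 1) and edges s → s of weight −U, s → s' of weight 1, and s' → s of weight 0. Then: (i) a play π from s satisfies 0 ≤ EL(π(n)) ≤ U for all n if and only if π is the periodic play of period 2U+1 that alternates s → s' → s exactly U times and then takes the self-loop s → s once, repeating this forever; and (ii) every strategy of player 1 induced by a Moore machine (M, m₀, α_u : M × S → M, α_n : M × S₁ → S) that is winning from s for LU(U, 0) satisfies |M| ≥ U + 1. -/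
open Filter

noncomputable section

variable {S : Type}

/-- The one-player game `G_U`: state `true` is `s`, state `false` is `s'`; edges are
`s → s` of weight `-U`, `s → s'` of weight `1`, and `s' → s` of weight `0`. -/
def gU (U : ℕ) : Game Bool where
  p1 := fun _ => True
  E := fun x y => match x, y with
    | true, _ => True
    | false, true => True
    | false, false => False
  w := fun x y => match x, y with
    | true, true => -(U : ℤ)
    | true, false => 1
    | false, _ => 0
  succ := fun s => ⟨true, by cases s <;> trivial⟩

/-- The periodic play of period `2U+1` from `s`: it alternates `s → s' → s` exactly `U` times
and then takes the self-loop `s → s` once, repeating this forever. -/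
def targetPlay (U : ℕ) : ℕ → Bool := fun k => decide ((k % (2 * U + 1)) % 2 = 0)

/-- The strategy induced by a Moore machine `(M, m₀, αu, αn)`: on a history `ρ · s` it plays
`αn (α̂u m₀ ρ) s`, where `α̂u` is the iterated update function. -/
def mooreStrat {M : Type} (m₀ : M) (αu : M → Bool → M) (αn : M → Bool → Bool) :
    List Bool → Bool :=
  fun ρ => match ρ.getLast? with
    | none => true
    | some s => αn (ρ.dropLast.foldl αu m₀) s


namespace LUAux

lemma ELp_succ' {S : Type} (G : Game S) (π : ℕ → S) (n : ℕ) :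
    ELp G π (n+1) = ELp G π n + G.w (π n) (π (n+1)) := Finset.sum_range_succ _ _

lemma target_true_iff (U n : ℕ) : targetPlay U n = true ↔ n % (2*U+1) % 2 = 0 := by
  simp [targetPlay]

lemma target_false_iff (U n : ℕ) : targetPlay U n = false ↔ ¬ (n % (2*U+1) % 2 = 0) := by
  simp [targetPlay]

lemma succ_mod (U n : ℕ) (hU : 1 ≤ U) :
    (n+1) % (2*U+1) = (n % (2*U+1) + 1) % (2*U+1) := by
  rw [Nat.add_mod, Nat.one_mod_eq_one.mpr (by omega)]

lemma w_tt (U : ℕ) : (gU U).w true true = -(U:ℤ) := rfl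
lemma w_tf (U : ℕ) : (gU U).w true false = 1 := rfl
lemma w_ft (U : ℕ) : (gU U).w false true = 0 := rfl

lemma forced (U : ℕ) (hU : 1 ≤ U) (π : ℕ → Bool) (hπ : IsPlay (gU U) true π)
    (hb : ∀ n, 0 ≤ ELp (gU U) π n ∧ ELp (gU U) π n ≤ (U:ℤ)) :
    ∀ n, π n = targetPlay U n ∧ ELp (gU U) π n = (((n % (2*U+1) + 1)/2 : ℕ) : ℤ) := by
  intro n
  induction n with
  | zero =>
    refine ⟨?_, ?_⟩
    · rw [hπ.1, eq_comm, target_true_iff]; simp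
    · simp [ELp]
  | succ n ih =>
    obtain ⟨hn, he⟩ := ih
    have hE := hπ.2 n
    have hr : n % (2*U+1) < 2*U+1 := Nat.mod_lt _ (by omega)
    have hsucc := succ_mod U n hU
    have hbn := hb (n+1)
    rw [ELp_succ'] at hbn ⊢
    cases hpn : π n <;> cases hpn1 : π (n+1) <;> rw [hpn, hpn1] at hbn hE <;> rw [hpn] at hn
    · -- false false : impossible edge
      exact absurd hE (by simp [gU])
    · -- false true
      have hodd : ¬ (n % (2*U+1) % 2 = 0) := by
        rw [← target_false_iff]; exact hn.symm
      have hm1 : (n+1) % (2*U+1) = n % (2*U+1) + 1 := by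
        rw [hsucc]; exact Nat.mod_eq_of_lt (by omega)
      refine ⟨?_, ?_⟩
      · rw [eq_comm, target_true_iff, hm1]; omega
      · rw [w_ft, he, hm1]; omega
    · -- true false
      have heven : n % (2*U+1) % 2 = 0 := by
        rw [← target_true_iff]; exact hn.symm
      rw [w_tf, he] at hbn
      have hlt : n % (2*U+1) + 1 < 2*U+1 := by omega
      have hm1 : (n+1) % (2*U+1) = n % (2*U+1) + 1 := by
        rw [hsucc]; exact Nat.mod_eq_of_lt hlt
      refine ⟨?_, ?_⟩
      · rw [eq_comm, target_false_iff, hm1]; omega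
      · rw [w_tf, he, hm1]; omega
    · -- true true
      have heven : n % (2*U+1) % 2 = 0 := by
        rw [← target_true_iff]; exact hn.symm
      rw [w_tt, he] at hbn
      have hr2U : n % (2*U+1) = 2*U := by omega
      have hm1 : (n+1) % (2*U+1) = 0 := by
        rw [hsucc, hr2U]; exact Nat.mod_self _
      refine ⟨?_, ?_⟩
      · rw [eq_comm, target_true_iff, hm1]
      · rw [w_tt, he, hm1, hr2U]; omega
  
lemma el_target (U : ℕ) (hU : 1 ≤ U) :
    ∀ n, ELp (gU U) (targetPlay U) n = (((n % (2*U+1) + 1)/2 : ℕ) : ℤ) := by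
  intro n
  induction n with
  | zero => simp [ELp]
  | succ n ih =>
    have hr : n % (2*U+1) < 2*U+1 := Nat.mod_lt _ (by omega)
    have hsucc := succ_mod U n hU
    rw [ELp_succ', ih]
    rcases Nat.mod_two_eq_zero_or_one (n % (2*U+1)) with hpar | hpar
    · rcases eq_or_lt_of_le (show n % (2*U+1) ≤ 2*U by omega) with h2U | h2U
      · have htn : targetPlay U n = true := by rw [target_true_iff]; omega
        have hm1 : (n+1) % (2*U+1) = 0 := by
          rw [hsucc, h2U]; exact Nat.mod_self _
        have htn1 : targetPlay U (n+1) = true := by rw [target_true_iff, hm1]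
        rw [htn, htn1, w_tt, hm1, h2U]
        omega
      · have htn : targetPlay U n = true := by rw [target_true_iff]; omega
        have hm1 : (n+1) % (2*U+1) = n % (2*U+1) + 1 := by
          rw [hsucc]; exact Nat.mod_eq_of_lt (by omega)
        have htn1 : targetPlay U (n+1) = false := by rw [target_false_iff, hm1]; omega
        rw [htn, htn1, w_tf, hm1]
        have : (n % (2*U+1)) % 2 = 0 := by omega
        omega
    · have htn : targetPlay U n = false := by rw [target_false_iff]; omega
      have hm1 : (n+1) % (2*U+1) = n % (2*U+1) + 1 := by
        rw [hsucc]; exact Nat.mod_eq_of_lt (by omega)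
      have htn1 : targetPlay U (n+1) = true := by rw [target_true_iff, hm1]; omega
      rw [htn, htn1, w_ft, hm1]
      have : (n % (2*U+1)) % 2 = 1 := by omega
      omega

/-- The run of the Moore machine along its own induced play. -/
def mooreRun {M : Type} (m₀ : M) (αu : M → Bool → M) (αn : M → Bool → Bool) : ℕ → M × Bool
  | 0 => (m₀, true)
  | n+1 =>
    ((αu (mooreRun m₀ αu αn n).1 (mooreRun m₀ αu αn n).2),
     (αn (mooreRun m₀ αu αn n).1 (mooreRun m₀ αu αn n).2))

lemma hist_eq {S : Type} (π : ℕ → S) (n : ℕ) :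
    hist π n = (List.ofFn fun i : Fin n => π i) ++ [π n] := by
  unfold hist
  rw [List.ofFn_succ', List.concat_eq_append]
  simp

lemma chain_append {S : Type} (R : S → S → Prop) (l : List S) (a : S) (h : l ≠ [])
    (h1 : List.Chain' R l) (h2 : R (l.getLast h) a) : List.Chain' R (l ++ [a]) := by
  rw [List.Chain', List.isChain_append]
  refine ⟨h1, List.isChain_singleton a, ?_⟩
  intro x hx y hy
  simp at hy; subst hy
  rw [List.getLast?_eq_getLast h] at hx
  simp at hx; subst hx; exact h2

lemma hist_succ {S : Type} (π : ℕ → S) (n : ℕ) :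
    hist π (n+1) = hist π n ++ [π (n+1)] := hist_eq π (n+1)

lemma hist_ne {S : Type} (π : ℕ → S) (n : ℕ) : hist π n ≠ [] := by
  rw [hist_eq]; simp

lemma hist_getLast {S : Type} (π : ℕ → S) (n : ℕ) (h : hist π n ≠ []) :
    (hist π n).getLast h = π n := by
  have h2 : (hist π n).getLast? = some (π n) := by
    rw [hist_eq]; exact List.getLast?_concat
  have h1 : (hist π n).getLast? = some ((hist π n).getLast h) :=
    List.getLast?_eq_getLast h
  exact Option.some.inj (h1.symm.trans h2)

lemma mooreRun_foldl {M : Type} (m₀ : M) (αu : M → Bool → M) (αn : M → Bool → Bool) :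
    ∀ n, (List.ofFn fun i : Fin n => (mooreRun m₀ αu αn i).2).foldl αu m₀ =
      (mooreRun m₀ αu αn n).1 := by
  intro n
  induction n with
  | zero => simp [mooreRun]
  | succ n ih =>
    rw [List.ofFn_succ', List.concat_eq_append, List.foldl_append]
    simp only [Fin.coe_castSucc, Fin.val_last, List.foldl_cons, List.foldl_nil]
    rw [ih]
    rfl

lemma mooreStrat_hist {M : Type} (m₀ : M) (αu : M → Bool → M) (αn : M → Bool → Bool)
    (n : ℕ) :
    mooreStrat m₀ αu αn (hist (fun k => (mooreRun m₀ αu αn k).2) n) =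
      (mooreRun m₀ αu αn (n+1)).2 := by
  rw [hist_eq]
  show mooreStrat m₀ αu αn _ = _
  unfold mooreStrat
  rw [List.getLast?_concat, List.dropLast_concat]
  simp only []
  rw [mooreRun_foldl]
  rfl

end LUAux

/-- Pseudo-polynomial memory lower bound for player 1 in bounded-energy games: in `G_U`,
(i) a play from `s` keeps the energy in `[0, U]` at all times iff it is the periodic play
`targetPlay U`, and (ii) every Moore-machine strategy of player 1 winning `LU(U, 0)` from `s`
has at least `U + 1` memory states. -/
theorem LU_memory_lower_bound (U : ℕ) (hU : 1 ≤ U) :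
    (∀ π, IsPlay (gU U) true π →
      ((∀ n, 0 ≤ ELp (gU U) π n ∧ ELp (gU U) π n ≤ (U : ℤ)) ↔ π = targetPlay U)) ∧
    (∀ (M : Type) [Fintype M] (m₀ : M) (αu : M → Bool → M) (αn : M → Bool → Bool),
      Winning1 (gU U) true (mooreStrat m₀ αu αn) (LUObj (gU U) U 0) →
      U + 1 ≤ Fintype.card M) := by
  have part1 : ∀ π, IsPlay (gU U) true π →
      ((∀ n, 0 ≤ ELp (gU U) π n ∧ ELp (gU U) π n ≤ (U : ℤ)) ↔ π = targetPlay U) := by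
    intro π hπ
    constructor
    · intro hb
      funext n
      exact (LUAux.forced U hU π hπ hb n).1
    · intro h n
      subst h
      rw [LUAux.el_target U hU n]
      have hr : n % (2*U+1) < 2*U+1 := Nat.mod_lt _ (by omega)
      constructor <;> omega
  refine ⟨part1, ?_⟩
  intro M _ m₀ αu αn hw
  set π : ℕ → Bool := fun n => (LUAux.mooreRun m₀ αu αn n).2 with hπdef
  have hstep : ∀ n, π (n + 1) = mooreStrat m₀ αu αn (hist π n) := by
    intro n
    rw [LUAux.mooreStrat_hist]
  have hchain : ∀ n, List.Chain' (gU U).E (hist π n) := by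
    intro n
    induction n with
    | zero =>
      show List.Chain' (gU U).E (List.ofFn _)
      simp [List.ofFn_succ, List.Chain']
    | succ n ih =>
      rw [LUAux.hist_succ]
      have hne : hist π n ≠ [] := LUAux.hist_ne π n
      have hlast : (hist π n).getLast hne = π n := LUAux.hist_getLast π n hne
      exact LUAux.chain_append _ _ _ hne ih (by
        rw [hlast, hstep n]
        have h := hw.1 (hist π n) hne ih (by rw [hlast]; trivial)
        rwa [hlast] at h)
  have hedge : ∀ n, (gU U).E (π n) (π (n + 1)) := by
    intro n
    have hne : hist π n ≠ [] := LUAux.hist_ne π n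
    have hlast : (hist π n).getLast hne = π n := LUAux.hist_getLast π n hne
    rw [hstep n]
    have := hw.1 (hist π n) hne (hchain n) (by rw [hlast]; trivial)
    rwa [hlast] at this
  have hplay : IsPlay (gU U) true π := ⟨rfl, hedge⟩
  have hcons : Consistent1 (gU U) (mooreStrat m₀ αu αn) π := fun n _ => hstep n
  have hobj := hw.2 π hplay hcons
  have hb : ∀ n, 0 ≤ ELp (gU U) π n ∧ ELp (gU U) π n ≤ (U : ℤ) := by
    intro n
    have := hobj n
    simpa using this
  have htarget : π = targetPlay U := (part1 π hplay).mp hb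
  have key : ∀ j k : ℕ, j < k → k ≤ U →
      (LUAux.mooreRun m₀ αu αn (2*j)).1 ≠ (LUAux.mooreRun m₀ αu αn (2*k)).1 := by
    intro j k hjk hk heq
    have hπval : ∀ i : ℕ, i ≤ U → π (2*i) = true := by
      intro i hi
      have : π (2*i) = targetPlay U (2*i) := congrFun htarget (2*i)
      have hlt : 2*i < 2*U+1 := by omega
      rw [this, LUAux.target_true_iff, Nat.mod_eq_of_lt hlt]
      omega
    have hpair : LUAux.mooreRun m₀ αu αn (2*j) = LUAux.mooreRun m₀ αu αn (2*k) := by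
      have h2 : (LUAux.mooreRun m₀ αu αn (2*j)).2 = (LUAux.mooreRun m₀ αu αn (2*k)).2 := by
        show π (2*j) = π (2*k)
        rw [hπval j (by omega), hπval k hk]
      exact Prod.ext heq h2
    have hshift : ∀ t, LUAux.mooreRun m₀ αu αn (2*j + t) = LUAux.mooreRun m₀ αu αn (2*k + t) := by
      intro t
      induction t with
      | zero => exact hpair
      | succ t ih =>
        show LUAux.mooreRun m₀ αu αn ((2*j + t) + 1) = LUAux.mooreRun m₀ αu αn ((2*k + t) + 1)
        simp only [LUAux.mooreRun, ih]
    have hsnd := congrArg Prod.snd (hshift (2*U - 2*j))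
    have e2 : 2*j + (2*U - 2*j) = 2*U := by omega
    have e3 : 2*k + (2*U - 2*j) = 2*U + 2*(k - j) := by omega
    rw [e2, e3] at hsnd
    have hsnd' : targetPlay U (2*U) = targetPlay U (2*U + 2*(k - j)) := by
      have l1 : π (2*U) = targetPlay U (2*U) := congrFun htarget _
      have l2 : π (2*U + 2*(k - j)) = targetPlay U (2*U + 2*(k - j)) := congrFun htarget _
      rw [← l1, ← l2]; exact hsnd
    have hmodL : (2*U) % (2*U+1) = 2*U := Nat.mod_eq_of_lt (by omega)
    have hmodR : (2*U + 2*(k - j)) % (2*U+1) = 2*(k - j) - 1 := by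
      rw [Nat.mod_eq_sub_mod (by omega), Nat.mod_eq_of_lt (by omega)]
      omega
    simp only [targetPlay, decide_eq_decide, hmodL, hmodR] at hsnd'
    omega
  have hinj : Function.Injective (fun j : Fin (U+1) => (LUAux.mooreRun m₀ αu αn (2*(j:ℕ))).1) := by
    intro a b hab
    by_contra hne
    rcases Nat.lt_trichotomy (a : ℕ) (b : ℕ) with h | h | h
    · exact key a b h (by omega) hab
    · exact hne (Fin.ext h)
    · exact key b a h (by omega) hab.symm
  calc U + 1 = Fintype.card (Fin (U+1)) := (Fintype.card_fin _).symm
    _ ≤ Fintype.card M := Fintype.card_le_of_injective _ hinj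

end
end
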